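/- arXiv:2308.03719 — 4 statements merged into one kernel-verified Lean document; each statement's English description precedes it below -/
import Mathlib

section
/- Let n ≥ 4 be an even integer. The characteristic polynomial of the distance Laplacian matrix D^L(CP_n) of the cocktail party graph CP_n equals x · (x − (n+2))^{n/2} · (x − n)^{n/2 − 1}; equivalently, its eigenvalue multiset is 0 with multiplicity 1, n+2 with multiplicity n/2, and n with multiplicity n/2 − 1. -/
/-- The cocktail party graph on `Fin n`: distinct vertices `i` and `j` are adjacent
iff `j ≢ i + n/2 (mod n)` (equivalently, iff they are not antipodal). -/
def cocktailParty (n : ℕ) : SimpleGraph (Fin n) where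
  Adj i j := i ≠ j ∧ (j : ℕ) ≠ ((i : ℕ) + n / 2) % n ∧ (i : ℕ) ≠ ((j : ℕ) + n / 2) % n
  symm := ⟨fun _ _ ⟨h1, h2, h3⟩ => ⟨h1.symm, h3, h2⟩⟩
  loopless := ⟨fun _ h => h.1 rfl⟩

/-- The distance Laplacian matrix `D^L(G) = Tr(G) - D(G)` of a graph `G` on a finite
vertex set: the diagonal entry at `u` is the transmission `Tr(u) = ∑ w, d(u, w)` and
the off-diagonal `(u,v)` entry is `-d(u,v)`. -/
noncomputable def distLapMatrix {V : Type*} [Fintype V] [DecidableEq V]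
    (G : SimpleGraph V) : Matrix V V ℝ :=
  Matrix.of fun u v => if u = v then ∑ w, (G.dist u w : ℝ) else -(G.dist u v : ℝ)

namespace CPaux

open SimpleGraph

lemma mod_form (M a k : ℕ) (ha : a < M) (hk : k ≤ M) :
    (a + k) % M = if a + k < M then a + k else a + k - M := by
  split_ifs with h
  · exact Nat.mod_eq_of_lt h
  · rw [Nat.mod_eq_sub_mod (by omega), Nat.mod_eq_of_lt (by omega)]

variable (m : ℕ)

lemma adj_iff (hm : 2 ≤ m) (i j : Fin (2*m)) :
    (cocktailParty (2*m)).Adj i j ↔ (i:ℕ) ≠ (j:ℕ) ∧ (j:ℕ) ≠ ((i:ℕ) + m) % (2*m) := by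
  have h2 : (2*m)/2 = m := by omega
  have hi := i.isLt; have hj := j.isLt
  constructor
  · rintro ⟨h1, h2', h3⟩
    exact ⟨fun h => h1 (Fin.ext h), by rwa [h2] at h2'⟩
  · rintro ⟨h1, h4⟩
    refine ⟨fun h => h1 (by rw [h]), by rwa [h2], ?_⟩
    rw [h2]
    intro h
    apply h4
    rw [h, mod_form _ _ _ (by omega) (by omega), mod_form _ _ _ hj (by omega)]
    split_ifs <;> omega

lemma dist_eq (hm : 2 ≤ m) (i j : Fin (2*m)) :
    (cocktailParty (2*m)).dist i j =
      if (i:ℕ) = (j:ℕ) then 0 else if (j:ℕ) = ((i:ℕ) + m) % (2*m) then 2 else 1 := by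
  have hi := i.isLt; have hj := j.isLt
  split_ifs with h1 h2
  · rw [show i = j from Fin.ext h1, SimpleGraph.dist_self]
  · -- antipodal: distance 2
    -- middle vertex w of value (i+1) % (2*m)
    set wv : ℕ := ((i:ℕ) + 1) % (2*m) with hwv
    have hwlt : wv < 2*m := Nat.mod_lt _ (by omega)
    set w : Fin (2*m) := ⟨wv, hwlt⟩ with hw
    have hwform : wv = if (i:ℕ) + 1 < 2*m then (i:ℕ)+1 else (i:ℕ)+1-2*m :=
      mod_form _ _ _ hi (by omega)
    have hjform : (j:ℕ) = if (i:ℕ) + m < 2*m then (i:ℕ)+m else (i:ℕ)+m-2*m := by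
      rw [h2]; exact mod_form _ _ _ hi (by omega)
    have hiw : (cocktailParty (2*m)).Adj i w := by
      rw [adj_iff m hm]
      rw [mod_form _ _ _ hi (by omega)]
      constructor
      · show (i:ℕ) ≠ wv
        rw [hwform]; split_ifs <;> omega
      · show wv ≠ _
        rw [hwform]; split_ifs <;> omega
    have hwj : (cocktailParty (2*m)).Adj w j := by
      rw [adj_iff m hm]
      constructor
      · show wv ≠ (j:ℕ)
        rw [hwform, hjform]; split_ifs <;> omega
      · rw [mod_form _ _ _ hwlt (by omega)]
        show (j:ℕ) ≠ _
        rw [hwform, hjform]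
        split_ifs <;> omega
    have hne : i ≠ j := fun h => h1 (congrArg Fin.val h)
    have hnadj : ¬ (cocktailParty (2*m)).Adj i j := by
      rw [adj_iff m hm]
      rintro ⟨-, hc⟩
      exact hc h2
    have hwalk : ((cocktailParty (2*m)).dist i j) ≤ 2 := by
      have := SimpleGraph.dist_le (Walk.cons hiw (Walk.cons hwj Walk.nil))
      simpa using this
    have hne0 : (cocktailParty (2*m)).dist i j ≠ 0 := by
      simp only [ne_eq, SimpleGraph.dist_eq_zero_iff_eq_or_not_reachable]
      push_neg
      exact ⟨hne, ⟨Walk.cons hiw (Walk.cons hwj Walk.nil)⟩⟩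
    have hne1 : (cocktailParty (2*m)).dist i j ≠ 1 := by
      simp only [ne_eq, SimpleGraph.dist_eq_one_iff_adj]
      exact hnadj
    omega
  · rw [SimpleGraph.dist_eq_one_iff_adj, adj_iff m hm]
    exact ⟨h1, h2⟩


lemma sum_ind {N : ℕ} (a : ℕ) (ha : a < N) (f : Fin N → ℝ) :
    ∑ i : Fin N, (if (i : ℕ) = a then 1 else 0) * f i = f ⟨a, ha⟩ := by
  have h : ∀ i : Fin N, (if (i : ℕ) = a then (1:ℝ) else 0) * f i
      = if i = ⟨a, ha⟩ then f i else 0 := by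
    intro i
    by_cases h : i = ⟨a, ha⟩
    · subst h; simp
    · rw [if_neg h, if_neg (by simpa [Fin.ext_iff] using h), zero_mul]
  rw [Finset.sum_congr rfl (fun i _ => h i), Finset.sum_ite_eq' Finset.univ ⟨a, ha⟩ f]
  simp

lemma sum_ind' {N : ℕ} (a : ℕ) (ha : a < N) (c : ℝ) :
    ∑ i : Fin N, (if (i : ℕ) = a then c else 0) = c := by
  have := sum_ind a ha (fun _ => c)
  simpa [ite_mul] using this

lemma trans_eq (hm : 2 ≤ m) (i : Fin (2*m)) :
    ∑ w : Fin (2*m), ((cocktailParty (2*m)).dist i w : ℝ) = 2*m := by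
  have hi := i.isLt
  have hA : ((i:ℕ) + m) % (2*m) = if (i:ℕ) + m < 2*m then (i:ℕ)+m else (i:ℕ)+m-2*m :=
    mod_form _ _ _ hi (by omega)
  have key : ∀ w : Fin (2*m), ((cocktailParty (2*m)).dist i w : ℝ)
      = 1 + (if (w:ℕ) = (i:ℕ) then (-1:ℝ) else 0)
          + (if (w:ℕ) = ((i:ℕ) + m) % (2*m) then (1:ℝ) else 0) := by
    intro w
    have hw := w.isLt
    rw [dist_eq m hm]
    rw [hA]
    (try split_ifs <;> first | omega | norm_num)
    all_goals first | omega | norm_num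
  rw [Finset.sum_congr rfl (fun w _ => key w)]
  rw [Finset.sum_add_distrib, Finset.sum_add_distrib, Finset.sum_const,
    sum_ind' (i:ℕ) hi (-1:ℝ), sum_ind' (((i:ℕ)+m) % (2*m)) (Nat.mod_lt _ (by omega)) (1:ℝ)]
  simp [Finset.card_univ]


/-- columns: index 0 ↦ all-ones; 1 ≤ j < m ↦ e_j + e_{j+m}; m ≤ j ↦ e_{j-m} - e_j -/
noncomputable def SS : Matrix (Fin (2*m)) (Fin (2*m)) ℝ := fun i j =>
  if (j:ℕ) = 0 then 1
  else if (j:ℕ) < m then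
    (if (i:ℕ) = (j:ℕ) then 1 else 0) + (if (i:ℕ) = (j:ℕ) + m then 1 else 0)
  else (if (i:ℕ) = (j:ℕ) - m then 1 else 0) - (if (i:ℕ) = (j:ℕ) then 1 else 0)

noncomputable def TT : Matrix (Fin (2*m)) (Fin (2*m)) ℝ := fun j i =>
  if (j:ℕ) = 0 then ((if (i:ℕ) = 0 then 1 else 0) + (if (i:ℕ) = m then 1 else 0)) / 2
  else if (j:ℕ) < m then
    ((if (i:ℕ) = (j:ℕ) then 1 else 0) + (if (i:ℕ) = (j:ℕ) + m then 1 else 0)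
      - (if (i:ℕ) = 0 then 1 else 0) - (if (i:ℕ) = m then 1 else 0)) / 2
  else ((if (i:ℕ) = (j:ℕ) - m then 1 else 0) - (if (i:ℕ) = (j:ℕ) then 1 else 0)) / 2

noncomputable def dd : Fin (2*m) → ℝ := fun j =>
  if (j:ℕ) = 0 then 0 else if (j:ℕ) < m then 2*m else 2*m+2

noncomputable def UU : Matrix (Fin (2*m)) (Fin (2*m)) ℝ := fun i j =>
  (if (i:ℕ) = (j:ℕ) then dd m j else 0)
    + (if (i:ℕ) = 0 ∧ (j:ℕ) ≠ 0 ∧ (j:ℕ) < m then -2 else 0)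

lemma sum2p {N : ℕ} (a b : ℕ) (ha : a < N) (hb : b < N) (f : Fin N → ℝ) :
    ∑ i : Fin N, ((if (i:ℕ) = a then 1 else 0) + (if (i:ℕ) = b then 1 else 0)) / 2 * f i
      = (f ⟨a, ha⟩ + f ⟨b, hb⟩) / 2 := by
  have h : ∀ i : Fin N, ((if (i:ℕ) = a then (1:ℝ) else 0) + (if (i:ℕ) = b then 1 else 0)) / 2 * f i
      = ((if (i:ℕ) = a then 1 else 0) * f i + (if (i:ℕ) = b then 1 else 0) * f i) / 2 := by
    intro i; ring
  rw [Finset.sum_congr rfl (fun i _ => h i), ← Finset.sum_div, Finset.sum_add_distrib,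
    sum_ind a ha, sum_ind b hb]

lemma sum2m {N : ℕ} (a b : ℕ) (ha : a < N) (hb : b < N) (f : Fin N → ℝ) :
    ∑ i : Fin N, ((if (i:ℕ) = a then 1 else 0) - (if (i:ℕ) = b then 1 else 0)) / 2 * f i
      = (f ⟨a, ha⟩ - f ⟨b, hb⟩) / 2 := by
  have h : ∀ i : Fin N, ((if (i:ℕ) = a then (1:ℝ) else 0) - (if (i:ℕ) = b then 1 else 0)) / 2 * f i
      = ((if (i:ℕ) = a then 1 else 0) * f i - (if (i:ℕ) = b then 1 else 0) * f i) / 2 := by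
    intro i; ring
  rw [Finset.sum_congr rfl (fun i _ => h i), ← Finset.sum_div, Finset.sum_sub_distrib,
    sum_ind a ha, sum_ind b hb]

lemma sum4 {N : ℕ} (a b c d : ℕ) (ha : a < N) (hb : b < N) (hc : c < N) (hd : d < N)
    (f : Fin N → ℝ) :
    ∑ i : Fin N, ((if (i:ℕ) = a then 1 else 0) + (if (i:ℕ) = b then 1 else 0)
        - (if (i:ℕ) = c then 1 else 0) - (if (i:ℕ) = d then 1 else 0)) / 2 * f i
      = (f ⟨a, ha⟩ + f ⟨b, hb⟩ - f ⟨c, hc⟩ - f ⟨d, hd⟩) / 2 := by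
  have h : ∀ i : Fin N, ((if (i:ℕ) = a then (1:ℝ) else 0) + (if (i:ℕ) = b then 1 else 0)
        - (if (i:ℕ) = c then 1 else 0) - (if (i:ℕ) = d then 1 else 0)) / 2 * f i
      = ((if (i:ℕ) = a then 1 else 0) * f i + (if (i:ℕ) = b then 1 else 0) * f i
          - (if (i:ℕ) = c then 1 else 0) * f i - (if (i:ℕ) = d then 1 else 0) * f i) / 2 := by
    intro i; ring
  rw [Finset.sum_congr rfl (fun i _ => h i), ← Finset.sum_div, Finset.sum_sub_distrib,
    Finset.sum_sub_distrib, Finset.sum_add_distrib, sum_ind a ha, sum_ind b hb,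
    sum_ind c hc, sum_ind d hd]

set_option maxHeartbeats 1000000 in
lemma TS_eq_one (hm : 2 ≤ m) : TT m * SS m = 1 := by
  ext j j'
  have hj := j.isLt; have hj' := j'.isLt
  rw [Matrix.mul_apply, Matrix.one_apply]
  by_cases hj0 : (j:ℕ) = 0
  · have hrow : ∀ i : Fin (2*m), TT m j i
        = ((if (i:ℕ) = 0 then 1 else 0) + (if (i:ℕ) = m then 1 else 0)) / 2 := by
      intro i; simp [TT, hj0]
    rw [Finset.sum_congr rfl (fun i _ => by rw [hrow i]),
      sum2p 0 m (by omega) (by omega) (fun i => SS m i j')]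
    simp only [SS]
    have : (j = j') ↔ ((j':ℕ) = 0) := by
      rw [Fin.ext_iff, hj0]; exact eq_comm
    rw [if_congr this rfl rfl]
    by_cases hj'0 : (j':ℕ) = 0
    · simp only [if_pos hj'0]
      (try split_ifs <;> first | omega | norm_num)
      all_goals first | omega | norm_num
    · simp only [if_neg hj'0]
      by_cases hj'm : (j':ℕ) < m
      · simp only [if_pos hj'm]
        (try split_ifs <;> first | omega | norm_num)
        all_goals first | omega | norm_num
      · simp only [if_neg hj'm]
        (try split_ifs <;> first | omega | norm_num)
        all_goals first | omega | norm_num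
  · by_cases hjm : (j:ℕ) < m
    · have hrow : ∀ i : Fin (2*m), TT m j i
          = ((if (i:ℕ) = (j:ℕ) then 1 else 0) + (if (i:ℕ) = (j:ℕ) + m then 1 else 0)
            - (if (i:ℕ) = 0 then 1 else 0) - (if (i:ℕ) = m then 1 else 0)) / 2 := by
        intro i; simp [TT, hj0, hjm]
      rw [Finset.sum_congr rfl (fun i _ => by rw [hrow i]),
        sum4 (j:ℕ) ((j:ℕ)+m) 0 m (by omega) (by omega) (by omega) (by omega)
          (fun i => SS m i j')]
      simp only [SS]
      have : (j = j') ↔ ((j:ℕ) = (j':ℕ)) := Fin.ext_iff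
      rw [if_congr this rfl rfl]
      by_cases hj'0 : (j':ℕ) = 0
      · simp only [if_pos hj'0]
        (try split_ifs <;> first | omega | norm_num)
        all_goals first | omega | norm_num
      · simp only [if_neg hj'0]
        by_cases hj'm : (j':ℕ) < m
        · simp only [if_pos hj'm]
          (try split_ifs <;> first | omega | norm_num)
          all_goals first | omega | norm_num
        · simp only [if_neg hj'm]
          (try split_ifs <;> first | omega | norm_num)
          all_goals first | omega | norm_num
    · have hrow : ∀ i : Fin (2*m), TT m j i
          = ((if (i:ℕ) = (j:ℕ) - m then 1 else 0) - (if (i:ℕ) = (j:ℕ) then 1 else 0)) / 2 := by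
        intro i; simp [TT, hj0, hjm]
      rw [Finset.sum_congr rfl (fun i _ => by rw [hrow i]),
        sum2m ((j:ℕ)-m) (j:ℕ) (by omega) (by omega) (fun i => SS m i j')]
      simp only [SS]
      have : (j = j') ↔ ((j:ℕ) = (j':ℕ)) := Fin.ext_iff
      rw [if_congr this rfl rfl]
      by_cases hj'0 : (j':ℕ) = 0
      · simp only [if_pos hj'0]
        (try split_ifs <;> first | omega | norm_num)
        all_goals first | omega | norm_num
      · simp only [if_neg hj'0]
        by_cases hj'm : (j':ℕ) < m
        · simp only [if_pos hj'm]
          (try split_ifs <;> first | omega | norm_num)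
          all_goals first | omega | norm_num
        · simp only [if_neg hj'm]
          (try split_ifs <;> first | omega | norm_num)
          all_goals first | omega | norm_num


lemma M_apply (hm : 2 ≤ m) (i j : Fin (2*m)) :
    distLapMatrix (cocktailParty (2*m)) i j
      = (2*m+1) * (if (j:ℕ) = (i:ℕ) then 1 else 0)
        - (if (j:ℕ) = ((i:ℕ) + m) % (2*m) then 1 else 0) - 1 := by
  have hi := i.isLt; have hj := j.isLt
  have hA : ((i:ℕ) + m) % (2*m) = if (i:ℕ) + m < 2*m then (i:ℕ)+m else (i:ℕ)+m-2*m :=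
    mod_form _ _ _ hi (by omega)
  rw [distLapMatrix, Matrix.of_apply]
  by_cases h : i = j
  · rw [if_pos h, trans_eq m hm]
    subst h
    rw [if_pos rfl, if_neg (by rw [hA]; split_ifs <;> omega)]
    ring
  · rw [if_neg h, dist_eq m hm,
      if_neg (show ¬(i:ℕ)=(j:ℕ) from fun hc => h (Fin.ext hc)),
      if_neg (show ¬(j:ℕ)=(i:ℕ) from fun hc => h (Fin.ext hc.symm))]
    split_ifs with h2 <;> push_cast <;> norm_num

lemma colsum (hm : 2 ≤ m) (j : Fin (2*m)) :
    ∑ w : Fin (2*m), SS m w j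
      = if (j:ℕ) = 0 then (2*m:ℝ) else if (j:ℕ) < m then 2 else 0 := by
  have hj := j.isLt
  by_cases hj0 : (j:ℕ) = 0
  · simp [SS, hj0, Finset.card_univ]
  · by_cases hjm : (j:ℕ) < m
    · rw [if_neg hj0, if_pos hjm]
      have : ∀ w : Fin (2*m), SS m w j
          = (if (w:ℕ) = (j:ℕ) then 1 else 0) + (if (w:ℕ) = (j:ℕ)+m then 1 else 0) := by
        intro w; simp [SS, hj0, hjm]
      rw [Finset.sum_congr rfl (fun w _ => this w), Finset.sum_add_distrib,
        sum_ind' (j:ℕ) (by omega) (1:ℝ), sum_ind' ((j:ℕ)+m) (by omega) (1:ℝ)]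
      norm_num
    · rw [if_neg hj0, if_neg hjm]
      have : ∀ w : Fin (2*m), SS m w j
          = (if (w:ℕ) = (j:ℕ)-m then 1 else 0) - (if (w:ℕ) = (j:ℕ) then 1 else 0) := by
        intro w; simp [SS, hj0, hjm]
      rw [Finset.sum_congr rfl (fun w _ => this w), Finset.sum_sub_distrib,
        sum_ind' ((j:ℕ)-m) (by omega) (1:ℝ), sum_ind' (j:ℕ) (by omega) (1:ℝ)]
      norm_num

lemma S_antip (hm : 2 ≤ m) (i j : Fin (2*m)) (ha : ((i:ℕ) + m) % (2*m) < 2*m) :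
    SS m ⟨((i:ℕ) + m) % (2*m), ha⟩ j = if (j:ℕ) < m then SS m i j else - SS m i j := by
  have hi := i.isLt; have hj := j.isLt
  have hA : ((i:ℕ) + m) % (2*m) = if (i:ℕ) + m < 2*m then (i:ℕ)+m else (i:ℕ)+m-2*m :=
    mod_form _ _ _ hi (by omega)
  simp only [SS, hA]
  (try split_ifs <;> first | omega | norm_num)
  all_goals first | omega | norm_num

lemma MS_eq_SU (hm : 2 ≤ m) :
    distLapMatrix (cocktailParty (2*m)) * SS m = SS m * UU m := by
  ext i j
  have hi := i.isLt; have hj := j.isLt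
  have halt : ((i:ℕ) + m) % (2*m) < 2*m := Nat.mod_lt _ (by omega)
  rw [Matrix.mul_apply, Matrix.mul_apply]
  have lhs : ∑ w, distLapMatrix (cocktailParty (2*m)) i w * SS m w j
      = (2*m+1) * SS m i j - SS m ⟨((i:ℕ) + m) % (2*m), halt⟩ j - ∑ w, SS m w j := by
    have key : ∀ w : Fin (2*m), distLapMatrix (cocktailParty (2*m)) i w * SS m w j
        = (2*m+1) * ((if (w:ℕ) = (i:ℕ) then 1 else 0) * SS m w j)
          - (if (w:ℕ) = ((i:ℕ) + m) % (2*m) then 1 else 0) * SS m w j - SS m w j := by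
      intro w; rw [M_apply m hm]; ring
    rw [Finset.sum_congr rfl (fun w _ => key w), Finset.sum_sub_distrib,
      Finset.sum_sub_distrib, ← Finset.mul_sum,
      sum_ind (i:ℕ) hi (fun w => SS m w j),
      sum_ind (((i:ℕ)+m) % (2*m)) halt (fun w => SS m w j)]
  have rhs : ∑ w, SS m i w * UU m w j
      = dd m j * SS m i j + (if (j:ℕ) ≠ 0 ∧ (j:ℕ) < m then (-2:ℝ) else 0) := by
    have key : ∀ w : Fin (2*m), SS m i w * UU m w j
        = (if (w:ℕ) = (j:ℕ) then 1 else 0) * (SS m i w * dd m j)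
          + (if (w:ℕ) = 0 then 1 else 0)
            * (SS m i w * (if (j:ℕ) ≠ 0 ∧ (j:ℕ) < m then (-2:ℝ) else 0)) := by
      intro w
      simp only [UU]
      split_ifs <;> first | (exfalso; omega) | ring
    rw [Finset.sum_congr rfl (fun w _ => key w), Finset.sum_add_distrib,
      sum_ind (j:ℕ) hj (fun w => SS m i w * dd m j),
      sum_ind 0 (by omega) (fun w => SS m i w * (if (j:ℕ) ≠ 0 ∧ (j:ℕ) < m then (-2:ℝ) else 0))]
    have hcol0 : SS m i ⟨0, by omega⟩ = 1 := by simp [SS]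
    rw [hcol0, Fin.eta]
    ring
  rw [lhs, rhs, colsum m hm, S_antip m hm]
  have hS1 : (j:ℕ) = 0 → SS m i j = 1 := by intro h0; simp [SS, h0]
  by_cases hj0 : (j:ℕ) = 0
  · rw [if_pos hj0, if_pos (by omega), hS1 hj0,
      if_neg (by rw [not_and_or]; left; exact fun hc => hc hj0)]
    simp [dd, hj0]
  · by_cases hjm : (j:ℕ) < m
    · rw [if_neg hj0, if_pos hjm, if_pos hjm, if_pos ⟨hj0, hjm⟩]
      simp only [dd, if_neg hj0, if_pos hjm]
      ring
    · rw [if_neg hj0, if_neg hjm, if_neg hjm,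
        if_neg (by rw [not_and_or]; right; exact hjm)]
      simp only [dd, if_neg hj0, if_neg hjm]
      ring


open Polynomial in
lemma charpoly_M (hm : 2 ≤ m) :
    (distLapMatrix (cocktailParty (2*m))).charpoly
      = ∏ i : Fin (2*m), (X - C (dd m i)) := by
  have hTS := TS_eq_one m hm
  have hMS := MS_eq_SU m hm
  set M := distLapMatrix (cocktailParty (2*m)) with hM
  have hTMS : TT m * M * SS m = UU m := by
    rw [Matrix.mul_assoc, hMS, ← Matrix.mul_assoc, hTS, Matrix.one_mul]
  set φ := (Polynomial.C (R := ℝ)).mapMatrix (m := Fin (2*m)) with hφ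
  have key : φ (TT m) * Matrix.charmatrix M * φ (SS m) = Matrix.charmatrix (UU m) := by
    rw [Matrix.charmatrix, Matrix.charmatrix]
    rw [Matrix.mul_sub, Matrix.sub_mul]
    congr 1
    · rw [Matrix.mul_assoc, (Matrix.scalar_commute (X : ℝ[X]) (Commute.all _) (φ (SS m))).eq,
        ← Matrix.mul_assoc, ← map_mul, hTS, map_one, Matrix.one_mul]
    · show φ (TT m) * φ M * φ (SS m) = φ (UU m)
      rw [← map_mul, ← map_mul, hTMS]
  have hdet : M.charpoly = (Matrix.charmatrix (UU m)).det := by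
    rw [← key, Matrix.det_mul, Matrix.det_mul]
    have hdet1 : (φ (TT m)).det * (φ (SS m)).det = 1 := by
      rw [← Matrix.det_mul, ← map_mul, hTS, map_one, Matrix.det_one]
    calc (Matrix.charmatrix M).det
        = (Matrix.charmatrix M).det * ((φ (TT m)).det * (φ (SS m)).det) := by
          rw [hdet1, mul_one]
      _ = (φ (TT m)).det * (Matrix.charmatrix M).det * (φ (SS m)).det := by ring
  rw [hdet]
  have htri : (UU m).BlockTriangular id := by
    intro a b hab
    have hab' : (b:ℕ) < (a:ℕ) := hab
    simp only [UU]
    rw [if_neg (by omega), if_neg (by rintro ⟨h1, -⟩; omega)]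
    norm_num
  rw [Matrix.det_of_upperTriangular htri.charmatrix]
  refine Finset.prod_congr rfl (fun i _ => ?_)
  rw [Matrix.charmatrix_apply_eq]
  have hUii : UU m i i = dd m i := by
    simp only [UU]
    rw [if_neg (show ¬((i:ℕ) = 0 ∧ (i:ℕ) ≠ 0 ∧ (i:ℕ) < m) by rintro ⟨h1, h2, -⟩; omega)]
    simp
  rw [hUii]

open Polynomial in
lemma charpoly_main (hm : 2 ≤ m) :
    (distLapMatrix (cocktailParty (2*m))).charpoly
      = X * (X - C (((2*m : ℕ) : ℝ) + 2)) ^ m * (X - C ((2*m : ℕ) : ℝ)) ^ (m - 1) := by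
  rw [charpoly_M m hm]
  set g : ℕ → ℝ[X] :=
    fun k => X - C (if k = 0 then 0 else if k < m then ((2*m : ℕ) : ℝ) else ((2*m : ℕ) : ℝ) + 2)
    with hg
  have hdd : ∀ i : Fin (2*m), X - C (dd m i) = g (i : ℕ) := by
    intro i
    simp only [g, dd]
    congr 2
    split_ifs <;> push_cast <;> ring
  rw [Finset.prod_congr rfl (fun i _ => hdd i), Fin.prod_univ_eq_prod_range g (2*m),
    Finset.range_eq_Ico,
    ← Finset.prod_Ico_consecutive g (show 0 ≤ m by omega) (show m ≤ 2*m by omega),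
    ← Finset.prod_Ico_consecutive g (show (0:ℕ) ≤ 1 by omega) (show 1 ≤ m by omega)]
  have h1 : ∏ k ∈ Finset.Ico 0 1, g k = X := by
    rw [show Finset.Ico 0 1 = {0} from rfl, Finset.prod_singleton]
    simp [g]
  have h2 : ∏ k ∈ Finset.Ico 1 m, g k = (X - C (((2*m : ℕ) : ℝ))) ^ (m - 1) := by
    rw [Finset.prod_congr rfl (fun k hk => show g k = X - C (((2*m : ℕ) : ℝ)) by
      rw [Finset.mem_Ico] at hk
      simp only [g]
      rw [if_neg (by omega), if_pos (by omega)]), Finset.prod_const, Nat.card_Ico]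
  have h3 : ∏ k ∈ Finset.Ico m (2*m), g k = (X - C (((2*m : ℕ) : ℝ) + 2)) ^ m := by
    rw [Finset.prod_congr rfl (fun k hk => show g k = X - C (((2*m : ℕ) : ℝ) + 2) by
      rw [Finset.mem_Ico] at hk
      simp only [g]
      rw [if_neg (by omega), if_neg (by omega)]), Finset.prod_const, Nat.card_Ico,
      show 2*m - m = m by omega]
  rw [h1, h2, h3]
  ring

end CPaux

open Polynomial in
/-- The characteristic polynomial of the distance Laplacian matrix of the cocktail
party graph `CP_n` is `x (x - (n+2))^{n/2} (x - n)^{n/2 - 1}`; equivalently, its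
eigenvalue multiset is `0` with multiplicity `1`, `n + 2` with multiplicity `n/2`,
and `n` with multiplicity `n/2 - 1`. -/
theorem charpoly_distLapMatrix_cocktailParty (n : ℕ) (hn : 4 ≤ n) (hev : Even n) :
    (distLapMatrix (cocktailParty n)).charpoly =
      X * (X - C ((n : ℝ) + 2)) ^ (n / 2) * (X - C (n : ℝ)) ^ (n / 2 - 1) ∧
    (distLapMatrix (cocktailParty n)).charpoly.roots =
      Multiset.replicate 1 (0 : ℝ) + Multiset.replicate (n / 2) ((n : ℝ) + 2) +
        Multiset.replicate (n / 2 - 1) (n : ℝ) := by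
  obtain ⟨m', hme⟩ := hev
  have hsub : n = 2 * m' := by omega
  subst hsub
  have hm : 2 ≤ m' := by omega
  have h2 : 2 * m' / 2 = m' := by omega
  rw [h2, CPaux.charpoly_main m' hm]
  refine ⟨rfl, ?_⟩
  have hB : (X - C (((2*m' : ℕ) : ℝ) + 2)) ^ m' ≠ 0 :=
    pow_ne_zero _ (X_sub_C_ne_zero _)
  have hA : (X - C ((2*m' : ℕ) : ℝ)) ^ (m' - 1) ≠ 0 :=
    pow_ne_zero _ (X_sub_C_ne_zero _)
  have hXB : (X : ℝ[X]) * (X - C (((2*m' : ℕ) : ℝ) + 2)) ^ m' ≠ 0 :=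
    mul_ne_zero X_ne_zero hB
  rw [Polynomial.roots_mul (mul_ne_zero hXB hA), Polynomial.roots_mul hXB,
    Polynomial.roots_X, Polynomial.roots_pow, Polynomial.roots_pow,
    Polynomial.roots_X_sub_C, Polynomial.roots_X_sub_C]
  simp [Multiset.nsmul_singleton, Multiset.replicate_one]
end

section
/- Let n ≥ 4 be an even integer and let n₁ be an integer with 1 ≤ n₁ ≤ n/2. Let Γ_{n,n₁} be the graph obtained from the cocktail party graph CP_n by adding n₁ of the n/2 missing edges. Then the characteristic polynomial of the Laplacian matrix L(Γ_{n,n₁}) equals x · (x − (n−2))^{n/2 − n₁} · (x − n)^{(n/2 + n₁) − 1}. -/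
/-- The graph `Γ_{n,n₁}` on `Fin n`: the complete graph `K_n` with the edges
`{i, i + n/2}` for `n₁ ≤ i < n/2` deleted. For `n₁ = 0` this is the cocktail party
graph `CP_n`, and for `1 ≤ n₁ ≤ n/2` it is obtained from `CP_n` by adding `n₁` of the
`n/2` missing edges. -/
def gammaGraph (n n₁ : ℕ) : SimpleGraph (Fin n) where
  Adj i j := i ≠ j ∧ ¬ ∃ k : ℕ, n₁ ≤ k ∧ k < n / 2 ∧
      (((i : ℕ) = k ∧ (j : ℕ) = k + n / 2) ∨ ((j : ℕ) = k ∧ (i : ℕ) = k + n / 2))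
  symm := ⟨fun _ _ ⟨h1, h2⟩ =>
    ⟨h1.symm, fun ⟨k, hk1, hk2, hor⟩ => h2 ⟨k, hk1, hk2, hor.symm⟩⟩⟩
  loopless := ⟨fun _ h => h.1 rfl⟩

noncomputable instance (n n₁ : ℕ) : DecidableRel (gammaGraph n n₁).Adj :=
  fun _ _ => Classical.dec _

open Polynomial Matrix Finset

section helpers
variable {μ : Type*} [DecidableEq μ] [Fintype μ] {R : Type*} [CommRing R]

lemma det_fromBlocks_symm (P Q : Matrix μ μ R) :
    (fromBlocks P Q Q P).det = (P + Q).det * (P - Q).det := by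
  have h : fromBlocks P Q Q P =
      fromBlocks 1 1 0 1 * fromBlocks (P - Q) 0 Q (P + Q) * fromBlocks (1 : Matrix μ μ R) (-1) 0 1 := by
    rw [fromBlocks_multiply, fromBlocks_multiply]
    ext (i | i) (j | j) <;> simp [fromBlocks]
  rw [h, det_mul, det_mul, det_fromBlocks_zero₂₁, det_fromBlocks_zero₂₁,
    det_fromBlocks_zero₁₂]
  simp
  ring

lemma charpoly_fromBlocks_symm (A B : Matrix μ μ R) :
    (fromBlocks A B B A).charpoly = (A + B).charpoly * (A - B).charpoly := by
  have h1 : charmatrix A + -(B.map C) = charmatrix (A + B) := by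
    simp [charmatrix, Matrix.map_add]; abel
  have h2 : charmatrix A - -(B.map C) = charmatrix (A - B) := by
    simp [charmatrix, Matrix.map_sub]; abel
  rw [Matrix.charpoly, charmatrix_fromBlocks, det_fromBlocks_symm, h1, h2]
  rfl

lemma charpoly_diagonal' (d : μ → R) :
    (diagonal d).charpoly = ∏ i, (X - C (d i)) := by
  have h : charmatrix (diagonal d) = diagonal fun i => X - C (d i) := by
    ext i j
    by_cases hij : i = j <;> simp [charmatrix, hij, diagonal_apply_ne, hij]
  rw [Matrix.charpoly, h, det_diagonal]

end helpers

set_option synthInstance.maxHeartbeats 1000000 in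
set_option maxHeartbeats 1000000 in
lemma charpoly_const_add (a b : ℝ) (k : ℕ) :
    (Matrix.of fun i j : Fin (k + 1) => (if i = j then a else 0) + b).charpoly
      = (X - C (a + (k + 1) * b)) * (X - C a) ^ k := by
  set M : Matrix (Fin (k + 1)) (Fin (k + 1)) ℝ :=
    Matrix.of fun i j : Fin (k + 1) => (if i = j then a else 0) + b with hMdef
  apply RatFunc.algebraMap_injective ℝ
  set φ : ℝ[X] →+* RatFunc ℝ := algebraMap ℝ[X] (RatFunc ℝ) with hφ
  set s : RatFunc ℝ := φ (X - C a) with hs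
  have hs0 : s ≠ 0 := by
    intro h
    exact X_sub_C_ne_zero a (RatFunc.algebraMap_injective ℝ (by rw [map_zero]; exact h))
  have hs0' : φ X - φ (Polynomial.C a) ≠ 0 := by rw [← map_sub]; exact hs0
  have hdet : φ M.charpoly = ((charmatrix M).map φ).det := by
    rw [Matrix.charpoly, RingHom.map_det, RingHom.mapMatrix_apply]
  set u : Fin (k + 1) → RatFunc ℝ := fun _ => -φ (Polynomial.C b) * s⁻¹ with hu
  set v : Fin (k + 1) → RatFunc ℝ := fun _ => 1 with hv
  have hM : (charmatrix M).map φ = s • (1 + Matrix.replicateCol Unit u * Matrix.replicateRow Unit v) := by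
    ext i j
    by_cases hij : i = j <;>
      · simp [hij, charmatrix_apply, Matrix.one_apply, diagonal_apply, Matrix.mul_apply,
          hMdef, hu, hv, hs, map_sub, map_add]
        field_simp [hs0']
        try ring
  rw [hdet, hM, Matrix.det_smul, Matrix.det_one_add_replicateCol_mul_replicateRow, dotProduct]
  simp only [hu, hv, one_mul, Finset.sum_const, Finset.card_univ, Fintype.card_fin, _root_.map_mul,
    map_sub, map_add, map_pow, map_natCast, nsmul_eq_mul]
  rw [hs]
  simp only [map_sub, Polynomial.C_1, map_one]
  field_simp
  push_cast
  ring

lemma card_filter_le_val (m c : ℕ) (h : c ≤ m) :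
    #(univ.filter fun i : Fin m => ¬ c ≤ (i : ℕ)) = c ∧
    #(univ.filter fun i : Fin m => c ≤ (i : ℕ)) = m - c := by
  have h1 : #(univ.filter fun i : Fin m => ¬ c ≤ (i : ℕ)) = c := by
    have hb : #(univ.filter fun i : Fin m => ¬ c ≤ (i : ℕ)) = #(Finset.range c) :=
      Finset.card_bij (fun i _ => (i : ℕ))
        (by intro x hx; simp at hx ⊢; omega)
        (fun x _ y _ hxy => Fin.val_injective hxy)
        (by intro b hb
            simp only [Finset.mem_range] at hb
            exact ⟨⟨b, lt_of_lt_of_le hb h⟩, by simp; omega, rfl⟩)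
    rw [hb, Finset.card_range]
  have h2 := Finset.card_filter_add_card_filter_not
    (s := (univ : Finset (Fin m))) (p := fun i : Fin m => c ≤ (i : ℕ))
  rw [Finset.card_univ, Fintype.card_fin] at h2
  exact ⟨h1, by omega⟩

open Polynomial in
/-- The characteristic polynomial of the Laplacian matrix of `Γ_{n,n₁}` (the cocktail
party graph `CP_n` with `n₁` of its missing edges added, `1 ≤ n₁ ≤ n/2`) is
`x (x - (n-2))^{n/2 - n₁} (x - n)^{(n/2 + n₁) - 1}`. -/
theorem charpoly_lapMatrix_gammaGraph (n n₁ : ℕ) (hn : 4 ≤ n) (hev : Even n)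
    (h1 : 1 ≤ n₁) (h2 : n₁ ≤ n / 2) :
    (SimpleGraph.lapMatrix ℝ (gammaGraph n n₁)).charpoly =
      X * (X - C ((n : ℝ) - 2)) ^ (n / 2 - n₁) * (X - C (n : ℝ)) ^ (n / 2 + n₁ - 1) := by
  obtain ⟨m, hm⟩ : ∃ m, n / 2 = m := ⟨_, rfl⟩
  have hnm : n = m + m := by have := Nat.even_iff.mp hev; omega
  rw [hm] at h2 ⊢
  obtain ⟨k, rfl⟩ : ∃ k, m = k + 1 := ⟨m - 1, by omega⟩
  set G := gammaGraph n n₁ with hG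
  -- adjacency characterization
  have hadj : ∀ u v : Fin n, G.Adj u v ↔ (u : ℕ) ≠ (v : ℕ) ∧
      ¬(((v : ℕ) = (u : ℕ) + (k + 1) ∧ n₁ ≤ (u : ℕ)) ∨
        ((u : ℕ) = (v : ℕ) + (k + 1) ∧ n₁ ≤ (v : ℕ))) := by
    intro u v
    have hu := u.isLt; have hv := v.isLt
    rw [hG]
    constructor
    · rintro ⟨hne, hp⟩
      refine ⟨fun h => hne (Fin.val_injective h), ?_⟩
      rintro (⟨ha, hb⟩ | ⟨ha, hb⟩)
      · exact hp ⟨(u : ℕ), hb, by omega, Or.inl ⟨rfl, by omega⟩⟩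
      · exact hp ⟨(v : ℕ), hb, by omega, Or.inr ⟨rfl, by omega⟩⟩
    · rintro ⟨hne, hp⟩
      refine ⟨fun h => hne (by rw [h]), ?_⟩
      rintro ⟨j, hj1, hj2, hor⟩
      rw [hm] at hj2
      apply hp
      omega
  -- degree computations
  have hdeg1 : ∀ u : Fin n, (((u : ℕ) < k + 1 ∧ (u : ℕ) < n₁) ∨
      ((k + 1) ≤ (u : ℕ) ∧ (u : ℕ) < (k + 1) + n₁)) → G.degree u = n - 1 := by
    intro u hu
    have hnf : G.neighborFinset u = Finset.univ.erase u := by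
      ext w
      rw [SimpleGraph.mem_neighborFinset, hadj u w, Finset.mem_erase]
      simp only [Finset.mem_univ, and_true, ne_eq, ← Fin.val_eq_val]
      have := u.isLt; have := w.isLt
      omega
    rw [← SimpleGraph.card_neighborFinset_eq_degree, hnf,
      Finset.card_erase_of_mem (Finset.mem_univ u), Finset.card_univ, Fintype.card_fin]
  have hdeg2 : ∀ u w : Fin n,
      ((n₁ ≤ (u : ℕ) ∧ (u : ℕ) < k + 1 ∧ (w : ℕ) = (u : ℕ) + (k + 1)) ∨
       ((k + 1) + n₁ ≤ (u : ℕ) ∧ (u : ℕ) = (w : ℕ) + (k + 1))) → G.degree u = n - 2 := by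
    intro u w hu
    have hwu : w ≠ u := by
      rw [ne_eq, ← Fin.val_eq_val]; omega
    have hnf : G.neighborFinset u = (Finset.univ.erase u).erase w := by
      ext x
      rw [SimpleGraph.mem_neighborFinset, hadj u x, Finset.mem_erase, Finset.mem_erase]
      simp only [Finset.mem_univ, and_true, ne_eq, ← Fin.val_eq_val]
      have := u.isLt; have := w.isLt; have := x.isLt
      omega
    rw [← SimpleGraph.card_neighborFinset_eq_degree, hnf,
      Finset.card_erase_of_mem (by simp [hwu]),
      Finset.card_erase_of_mem (Finset.mem_univ u), Finset.card_univ, Fintype.card_fin]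
    omega
  -- lapMatrix entries
  have hent : ∀ u v : Fin n, G.lapMatrix ℝ u v =
      (if u = v then (G.degree u : ℝ) else 0) - (if G.Adj u v then 1 else 0) := by
    intro u v
    simp [SimpleGraph.lapMatrix, SimpleGraph.degMatrix, SimpleGraph.adjMatrix,
      Matrix.sub_apply, Matrix.diagonal_apply]
  -- the block form
  set A : Matrix (Fin (k + 1)) (Fin (k + 1)) ℝ := Matrix.of fun i j =>
    if i = j then (if n₁ ≤ (i : ℕ) then (n : ℝ) - 2 else (n : ℝ) - 1) else -1 with hA
  set B : Matrix (Fin (k + 1)) (Fin (k + 1)) ℝ := Matrix.of fun i j =>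
    if i = j then (if n₁ ≤ (i : ℕ) then 0 else -1) else -1 with hB
  set e : Fin (k + 1) ⊕ Fin (k + 1) ≃ Fin n := finSumFinEquiv.trans (finCongr hnm.symm) with he
  have hvl : ∀ a : Fin (k + 1), ((e (Sum.inl a)) : ℕ) = (a : ℕ) := fun a => rfl
  have hvr : ∀ a : Fin (k + 1), ((e (Sum.inr a)) : ℕ) = (k + 1) + (a : ℕ) := fun a => rfl
  have hL : reindex e.symm e.symm (G.lapMatrix ℝ) = fromBlocks A B B A := by
    ext x y
    rcases x with a | a <;> rcases y with b | b <;>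
      simp only [reindex_apply, submatrix_apply, Equiv.symm_symm, fromBlocks,
        Sum.elim_inl, Sum.elim_inr, Matrix.of_apply, hent]
    · -- inl / inl
      by_cases hab : a = b
      · subst hab
        rw [if_pos rfl, if_neg (G.loopless.irrefl _), hA]
        simp only [Matrix.of_apply, if_pos rfl, sub_zero]
        by_cases hna : n₁ ≤ (a : ℕ)
        · rw [hdeg2 _ (e (Sum.inr a)) (Or.inl ⟨by rw [hvl]; exact hna,
            by rw [hvl]; exact a.isLt, by rw [hvl, hvr]; omega⟩), if_pos hna,
            Nat.cast_sub (by omega : 2 ≤ n)]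
          norm_num
        · rw [hdeg1 _ (Or.inl ⟨by rw [hvl]; exact a.isLt, by rw [hvl]; omega⟩), if_neg hna,
            Nat.cast_sub (by omega : 1 ≤ n)]
          norm_num
      · have hab' : (a : ℕ) ≠ (b : ℕ) := fun h => hab (Fin.val_injective h)
        have h1' : e (Sum.inl a) ≠ e (Sum.inl b) := by
          simp [Equiv.apply_eq_iff_eq, hab]
        have hAd : G.Adj (e (Sum.inl a)) (e (Sum.inl b)) := by
          rw [hadj, hvl, hvl]
          have := a.isLt; have := b.isLt
          omega
        rw [if_neg h1', if_pos hAd, hA]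
        simp [Matrix.of_apply, hab]
    · -- inl / inr
      have h1' : e (Sum.inl a) ≠ e (Sum.inr b) := by
        simp [Equiv.apply_eq_iff_eq]
      have hAd : G.Adj (e (Sum.inl a)) (e (Sum.inr b)) ↔
          ¬((a : ℕ) = (b : ℕ) ∧ n₁ ≤ (a : ℕ)) := by
        rw [hadj, hvl, hvr]
        have := a.isLt; have := b.isLt
        omega
      rw [if_neg h1']
      by_cases hcond : (a : ℕ) = (b : ℕ) ∧ n₁ ≤ (a : ℕ)
      · have hab : a = b := Fin.val_injective hcond.1
        have hna := hcond.2
        subst hab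
        rw [if_neg (fun h => (hAd.mp h) hcond), hB]
        simp [Matrix.of_apply, hna]
      · rw [if_pos (hAd.mpr hcond), hB]
        by_cases hab : a = b
        · subst hab
          have hna : ¬ n₁ ≤ (a : ℕ) := fun h => hcond ⟨rfl, h⟩
          simp [Matrix.of_apply, hna]
        · simp [Matrix.of_apply, hab]
    · -- inr / inl
      have h1' : e (Sum.inr a) ≠ e (Sum.inl b) := by
        simp [Equiv.apply_eq_iff_eq]
      have hAd : G.Adj (e (Sum.inr a)) (e (Sum.inl b)) ↔
          ¬((a : ℕ) = (b : ℕ) ∧ n₁ ≤ (a : ℕ)) := by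
        rw [hadj, hvl, hvr]
        have := a.isLt; have := b.isLt
        omega
      rw [if_neg h1']
      by_cases hcond : (a : ℕ) = (b : ℕ) ∧ n₁ ≤ (a : ℕ)
      · have hab : a = b := Fin.val_injective hcond.1
        have hna := hcond.2
        subst hab
        rw [if_neg (fun h => (hAd.mp h) hcond), hB]
        simp [Matrix.of_apply, hna]
      · rw [if_pos (hAd.mpr hcond), hB]
        by_cases hab : a = b
        · subst hab
          have hna : ¬ n₁ ≤ (a : ℕ) := fun h => hcond ⟨rfl, h⟩
          simp [Matrix.of_apply, hna]
        · simp [Matrix.of_apply, hab]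
    · -- inr / inr
      by_cases hab : a = b
      · subst hab
        rw [if_pos rfl, if_neg (G.loopless.irrefl _), hA]
        simp only [Matrix.of_apply, if_pos rfl, sub_zero]
        by_cases hna : n₁ ≤ (a : ℕ)
        · rw [hdeg2 _ (e (Sum.inl a)) (Or.inr ⟨by rw [hvr]; omega, by rw [hvl, hvr]; omega⟩),
            if_pos hna, Nat.cast_sub (by omega : 2 ≤ n)]
          norm_num
        · rw [hdeg1 _ (Or.inr ⟨by rw [hvr]; omega, by rw [hvr]; omega⟩), if_neg hna,
            Nat.cast_sub (by omega : 1 ≤ n)]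
          norm_num
      · have hab' : (a : ℕ) ≠ (b : ℕ) := fun h => hab (Fin.val_injective h)
        have h1' : e (Sum.inr a) ≠ e (Sum.inr b) := by
          simp [Equiv.apply_eq_iff_eq, hab]
        have hAd : G.Adj (e (Sum.inr a)) (e (Sum.inr b)) := by
          rw [hadj, hvr, hvr]
          have := a.isLt; have := b.isLt
          omega
        rw [if_neg h1', if_pos hAd, hA]
        simp [Matrix.of_apply, hab]
  -- assembly
  rw [← Matrix.charpoly_reindex e.symm (G.lapMatrix ℝ), hL, charpoly_fromBlocks_symm]
  have hABp : A + B = Matrix.of fun i j : Fin (k + 1) => (if i = j then (n : ℝ) else 0) + (-2) := by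
    ext i j
    simp only [Matrix.add_apply, hA, hB, Matrix.of_apply]
    split_ifs <;> ring
  have hABm : A - B = diagonal
      (fun i : Fin (k + 1) => if n₁ ≤ (i : ℕ) then (n : ℝ) - 2 else (n : ℝ)) := by
    ext i j
    simp only [Matrix.sub_apply, hA, hB, Matrix.of_apply, diagonal_apply]
    split_ifs <;> ring
  rw [hABp, hABm, charpoly_const_add, charpoly_diagonal']
  have h0 : (n : ℝ) + ((k : ℝ) + 1) * (-2) = 0 := by
    rw [hnm]; push_cast; ring
  rw [h0, map_zero, sub_zero]
  have hprod : (∏ i : Fin (k + 1), (X - C (if n₁ ≤ (i : ℕ) then (n : ℝ) - 2 else (n : ℝ))))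
      = (X - C ((n : ℝ) - 2)) ^ (k + 1 - n₁) * (X - C (n : ℝ)) ^ n₁ := by
    simp only [apply_ite (fun r : ℝ => X - C r)]
    rw [Finset.prod_ite, Finset.prod_const, Finset.prod_const,
      (card_filter_le_val (k + 1) n₁ h2).2, (card_filter_le_val (k + 1) n₁ h2).1]
  rw [hprod]
  have hexp : k + 1 + n₁ - 1 = k + n₁ := by omega
  rw [hexp, pow_add]
  ring
end

section
/- Let n ≥ 4 be an even integer and let n₁ be an integer with 1 ≤ n₁ ≤ n/2. The characteristic polynomial of the distance Laplacian matrix D^L(Γ_{n,n₁}) equals x · (x − (n+2))^{n/2 − n₁} · (x − n)^{(n/2 + n₁) − 1}; equivalently, its eigenvalue multiset is 0 with multiplicity 1, n+2 with multiplicity n/2 − n₁, and n with multiplicity (n/2 + n₁) − 1. -/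
namespace GammaAux

open Finset

variable {n n₁ : ℕ}

/-- the pair relation -/
def IsPair (n n₁ : ℕ) (u v : Fin n) : Prop := ∃ k : ℕ, n₁ ≤ k ∧ k < n / 2 ∧
  (((u : ℕ) = k ∧ (v : ℕ) = k + n / 2) ∨ ((v : ℕ) = k ∧ (u : ℕ) = k + n / 2))

lemma adj_iff {u v : Fin n} : (gammaGraph n n₁).Adj u v ↔ u ≠ v ∧ ¬ IsPair n n₁ u v := Iff.rfl

def pa (n n₁ : ℕ) (i : Fin (n / 2 - n₁)) : Fin n := ⟨n₁ + i, by have := i.2; omega⟩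
def pb (n n₁ : ℕ) (i : Fin (n / 2 - n₁)) : Fin n := ⟨n₁ + i + n / 2, by have := i.2; omega⟩

lemma pa_val (i : Fin (n / 2 - n₁)) : (pa n n₁ i : ℕ) = n₁ + i := rfl
lemma pb_val (i : Fin (n / 2 - n₁)) : (pb n n₁ i : ℕ) = n₁ + i + n / 2 := rfl

lemma pa_ne_pb (i j : Fin (n / 2 - n₁)) : pa n n₁ i ≠ pb n n₁ j := by
  have := i.2; have := j.2
  intro h
  have := congrArg Fin.val h
  simp [pa, pb] at this; omega

lemma pa_inj {i j : Fin (n / 2 - n₁)} (h : pa n n₁ i = pa n n₁ j) : i = j := by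
  have := congrArg Fin.val h; simp [pa] at this; exact Fin.ext this

lemma pb_inj {i j : Fin (n / 2 - n₁)} (h : pb n n₁ i = pb n n₁ j) : i = j := by
  have := congrArg Fin.val h; simp [pb] at this; exact Fin.ext this

lemma isPair_iff {u v : Fin n} : IsPair n n₁ u v ↔
    ∃ i : Fin (n / 2 - n₁), (u = pa n n₁ i ∧ v = pb n n₁ i) ∨ (v = pa n n₁ i ∧ u = pb n n₁ i) := by
  constructor
  · rintro ⟨k, hk1, hk2, h⟩
    refine ⟨⟨k - n₁, by omega⟩, ?_⟩
    rcases h with ⟨h1, h2⟩ | ⟨h1, h2⟩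
    · left; constructor <;> apply Fin.ext <;> simp [pa, pb] <;> omega
    · right; constructor <;> apply Fin.ext <;> simp [pa, pb] <;> omega
  · rintro ⟨i, h⟩
    have := i.2
    refine ⟨n₁ + i, by omega, by omega, ?_⟩
    rcases h with ⟨h1, h2⟩ | ⟨h1, h2⟩ <;> subst h1 <;> subst h2 <;> simp [pa, pb]

lemma isPair_symm {u v : Fin n} (h : IsPair n n₁ u v) : IsPair n n₁ v u := by
  obtain ⟨k, h1, h2, h3⟩ := h; exact ⟨k, h1, h2, h3.symm⟩

lemma isPair_ne {u v : Fin n} (h : IsPair n n₁ u v) : u ≠ v := by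
  obtain ⟨k, hk1, hk2, h⟩ := h
  intro he
  subst he; rcases h with ⟨h1, h2⟩ | ⟨h1, h2⟩ <;> omega

lemma pair_unique {u v w : Fin n} (h : IsPair n n₁ u v) (h' : IsPair n n₁ u w) : v = w := by
  obtain ⟨k, hk1, hk2, h⟩ := h
  obtain ⟨k', hk1', hk2', h'⟩ := h'
  rcases h with ⟨h1, h2⟩ | ⟨h1, h2⟩ <;> rcases h' with ⟨h3, h4⟩ | ⟨h3, h4⟩ <;>
    (apply Fin.ext; omega)


open scoped Classical

lemma exists_third (u v : Fin n) (hn : 4 ≤ n) : ∃ w : Fin n, w ≠ u ∧ w ≠ v := by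
  by_contra h
  push_neg at h
  have hsub : (Finset.univ : Finset (Fin n)) ⊆ {u, v} := by
    intro w _
    simp only [Finset.mem_insert, Finset.mem_singleton]
    by_cases hw : w = u
    · exact Or.inl hw
    · exact Or.inr (h w hw)
  have := Finset.card_le_card hsub
  have h2 : ({u, v} : Finset (Fin n)).card ≤ 2 := Finset.card_insert_le _ _ |>.trans (by simp)
  simp [Finset.card_univ] at this
  omega

lemma dist_pair {u v : Fin n} (hn : 4 ≤ n) (hp : IsPair n n₁ u v) :
    (gammaGraph n n₁).dist u v = 2 := by
  obtain ⟨w, hwu, hwv⟩ := exists_third u v hn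
  have huv : u ≠ v := isPair_ne hp
  have h1 : (gammaGraph n n₁).Adj u w := by
    rw [adj_iff]
    exact ⟨Ne.symm hwu, fun hq => hwv (pair_unique hp hq).symm⟩
  have h2 : (gammaGraph n n₁).Adj w v := by
    rw [adj_iff]
    exact ⟨hwv, fun hq => hwu (pair_unique (isPair_symm hq) (isPair_symm hp))⟩
  let p : (gammaGraph n n₁).Walk u v := SimpleGraph.Walk.cons h1 (SimpleGraph.Walk.cons h2 SimpleGraph.Walk.nil)
  have hle : (gammaGraph n n₁).dist u v ≤ 2 := by
    have := SimpleGraph.dist_le p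
    simpa [p] using this
  have hpos : 0 < (gammaGraph n n₁).dist u v :=
    SimpleGraph.Reachable.pos_dist_of_ne ⟨p⟩ huv
  have hne1 : (gammaGraph n n₁).dist u v ≠ 1 := by
    intro hd
    have := (SimpleGraph.dist_eq_one_iff_adj).mp hd
    rw [adj_iff] at this
    exact this.2 hp
  omega

lemma dist_nonpair {u v : Fin n} (huv : u ≠ v) (hp : ¬ IsPair n n₁ u v) :
    (gammaGraph n n₁).dist u v = 1 :=
  SimpleGraph.dist_eq_one_iff_adj.mpr (adj_iff.mpr ⟨huv, hp⟩)

lemma dist_cast_eq {u w : Fin n} (hn : 4 ≤ n) :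
    ((gammaGraph n n₁).dist u w : ℝ) =
      (if w = u then 0 else 1) + (if IsPair n n₁ u w then 1 else 0) := by
  by_cases h1 : w = u
  · subst h1
    rw [SimpleGraph.dist_self, if_pos rfl, if_neg (fun hp => isPair_ne hp rfl)]
    norm_num
  · by_cases h2 : IsPair n n₁ u w
    · rw [dist_pair hn h2, if_neg h1, if_pos h2]; norm_num
    · rw [dist_nonpair (Ne.symm h1) h2, if_neg h1, if_neg h2]; norm_num

lemma transmission (hn : 4 ≤ n) (u : Fin n) :
    ∑ w, ((gammaGraph n n₁).dist u w : ℝ) =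
      ((n : ℝ) - 1) + (if ∃ v, IsPair n n₁ u v then 1 else 0) := by
  have h1 : ∑ w, ((gammaGraph n n₁).dist u w : ℝ)
      = ∑ w : Fin n, ((if w = u then (0:ℝ) else 1) + (if IsPair n n₁ u w then 1 else 0)) :=
    Finset.sum_congr rfl fun w _ => dist_cast_eq hn
  rw [h1, Finset.sum_add_distrib]
  congr 1
  · have : ∀ w : Fin n, (if w = u then (0:ℝ) else 1) = 1 - (if w = u then 1 else 0) := by
      intro w; split <;> norm_num
    rw [Finset.sum_congr rfl fun w _ => this w, Finset.sum_sub_distrib]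
    simp [Finset.card_univ]
  · by_cases h : ∃ v, IsPair n n₁ u v
    · obtain ⟨v0, hv0⟩ := h
      have : ∀ w : Fin n, (if IsPair n n₁ u w then (1:ℝ) else 0) = (if w = v0 then 1 else 0) := by
        intro w
        by_cases hw : IsPair n n₁ u w
        · rw [if_pos hw, if_pos (pair_unique hv0 hw).symm]
        · rw [if_neg hw, if_neg (fun he => hw (by rw [he]; exact hv0))]
      rw [Finset.sum_congr rfl fun w _ => this w, if_pos ⟨v0, hv0⟩]
      simp
    · rw [if_neg h]
      refine Finset.sum_eq_zero fun w _ => if_neg (fun hw => h ⟨w, hw⟩)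

lemma matched_iff {u : Fin n} :
    (∃ v, IsPair n n₁ u v) ↔ ∃ i : Fin (n / 2 - n₁), u = pa n n₁ i ∨ u = pb n n₁ i := by
  constructor
  · rintro ⟨v, hv⟩
    rw [isPair_iff] at hv
    obtain ⟨i, ⟨h1, _⟩ | ⟨_, h1⟩⟩ := hv
    · exact ⟨i, Or.inl h1⟩
    · exact ⟨i, Or.inr h1⟩
  · rintro ⟨i, h | h⟩
    · exact ⟨pb n n₁ i, isPair_iff.mpr ⟨i, Or.inl ⟨h, rfl⟩⟩⟩
    · exact ⟨pa n n₁ i, isPair_iff.mpr ⟨i, Or.inr ⟨rfl, h⟩⟩⟩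


/-- the vector supported on the pair `i` -/
def wv (n n₁ : ℕ) (i : Fin (n / 2 - n₁)) (u : Fin n) : ℝ :=
  (if u = pa n n₁ i then 1 else 0) - (if u = pb n n₁ i then 1 else 0)

lemma wv_pa (i : Fin (n / 2 - n₁)) : wv n n₁ i (pa n n₁ i) = 1 := by
  simp [wv, pa_ne_pb i i]

lemma wv_pb (i : Fin (n / 2 - n₁)) : wv n n₁ i (pb n n₁ i) = -1 := by
  simp [wv, (pa_ne_pb i i).symm]

lemma wv_eq_zero {i : Fin (n / 2 - n₁)} {u : Fin n} (h1 : u ≠ pa n n₁ i)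
    (h2 : u ≠ pb n n₁ i) : wv n n₁ i u = 0 := by
  simp [wv, h1, h2]

lemma sum_wv (i : Fin (n / 2 - n₁)) : ∑ v, wv n n₁ i v = 0 := by
  simp [wv, Finset.sum_sub_distrib, Finset.sum_ite_eq']

lemma sum_ind_mul (x y : Fin n) :
    ∑ v : Fin n, (if v = x then (1:ℝ) else 0) * (if v = y then 1 else 0)
      = if x = y then 1 else 0 := by
  have h : ∀ v : Fin n, (if v = x then (1:ℝ) else 0) * (if v = y then 1 else 0)
      = if v = x then (if x = y then (1:ℝ) else 0) else 0 := by
    intro v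
    by_cases hv : v = x
    · subst hv; simp
    · simp [hv]
  rw [Finset.sum_congr rfl fun v _ => h v, Finset.sum_ite_eq' Finset.univ x]
  simp

lemma sum_v_wv_mul (i j : Fin (n / 2 - n₁)) :
    ∑ v, wv n n₁ i v * wv n n₁ j v = if i = j then 2 else 0 := by
  have h : ∀ v : Fin n, wv n n₁ i v * wv n n₁ j v =
      (if v = pa n n₁ i then (1:ℝ) else 0) * (if v = pa n n₁ j then 1 else 0)
      - (if v = pa n n₁ i then (1:ℝ) else 0) * (if v = pb n n₁ j then 1 else 0)
      - (if v = pb n n₁ i then (1:ℝ) else 0) * (if v = pa n n₁ j then 1 else 0)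
      + (if v = pb n n₁ i then (1:ℝ) else 0) * (if v = pb n n₁ j then 1 else 0) := by
    intro v; simp only [wv]; ring
  rw [Finset.sum_congr rfl fun v _ => h v, Finset.sum_add_distrib,
    Finset.sum_sub_distrib, Finset.sum_sub_distrib, sum_ind_mul, sum_ind_mul,
    sum_ind_mul, sum_ind_mul]
  rw [if_neg (pa_ne_pb i j), if_neg (Ne.symm (pa_ne_pb j i))]
  by_cases hij : i = j
  · subst hij; simp; norm_num
  · rw [if_neg (fun he => hij (pa_inj he)), if_neg (fun he => hij (pb_inj he)), if_neg hij]
    norm_num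

lemma sum_wv_mul (u v : Fin n) : ∑ i, wv n n₁ i u * wv n n₁ i v =
    if u = v then (if ∃ j, IsPair n n₁ u j then 1 else 0)
    else (if IsPair n n₁ u v then -1 else 0) := by
  by_cases huv : u = v
  · subst huv
    rw [if_pos rfl]
    by_cases hm : ∃ j, IsPair n n₁ u j
    · rw [if_pos hm]
      rw [matched_iff] at hm
      obtain ⟨i0, hi0⟩ := hm
      rw [Finset.sum_eq_single i0]
      · rcases hi0 with h | h <;> subst h <;> simp [wv_pa, wv_pb]
      · intro j _ hj
        rcases hi0 with h | h <;> subst h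
        · rw [wv_eq_zero (fun he => hj (pa_inj he).symm) (pa_ne_pb i0 j), zero_mul]
        · rw [wv_eq_zero (Ne.symm (pa_ne_pb j i0)) (fun he => hj (pb_inj he).symm), zero_mul]
      · intro h; exact absurd (Finset.mem_univ i0) h
    · rw [if_neg hm]
      refine Finset.sum_eq_zero fun i _ => ?_
      have h1 : u ≠ pa n n₁ i := fun he => hm (matched_iff.mpr ⟨i, Or.inl he⟩)
      have h2 : u ≠ pb n n₁ i := fun he => hm (matched_iff.mpr ⟨i, Or.inr he⟩)
      rw [wv_eq_zero h1 h2, zero_mul]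
  · rw [if_neg huv]
    by_cases hp : IsPair n n₁ u v
    · rw [if_pos hp]
      rw [isPair_iff] at hp
      obtain ⟨i0, hc⟩ := hp
      rw [Finset.sum_eq_single i0]
      · rcases hc with ⟨h1, h2⟩ | ⟨h1, h2⟩ <;> subst h1 <;> subst h2 <;>
          simp [wv_pa, wv_pb]
      · intro j _ hj
        rcases hc with ⟨h1, h2⟩ | ⟨h1, h2⟩ <;> subst h1 <;> subst h2
        · rw [wv_eq_zero (fun he => hj (pa_inj he).symm) (pa_ne_pb i0 j), zero_mul]
        · rw [wv_eq_zero (Ne.symm (pa_ne_pb j i0)) (fun he => hj (pb_inj he).symm), zero_mul]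
      · intro h; exact absurd (Finset.mem_univ i0) h
    · rw [if_neg hp]
      refine Finset.sum_eq_zero fun i _ => ?_
      by_cases h1 : u = pa n n₁ i
      · have hv1 : v ≠ pa n n₁ i := fun he => huv (h1.trans he.symm)
        have hv2 : v ≠ pb n n₁ i := fun he => hp (isPair_iff.mpr ⟨i, Or.inl ⟨h1, he⟩⟩)
        rw [wv_eq_zero hv1 hv2, mul_zero]
      · by_cases h2 : u = pb n n₁ i
        · have hv1 : v ≠ pa n n₁ i := fun he => hp (isPair_iff.mpr ⟨i, Or.inr ⟨he, h2⟩⟩)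
          have hv2 : v ≠ pb n n₁ i := fun he => huv (h2.trans he.symm)
          rw [wv_eq_zero hv1 hv2, mul_zero]
        · rw [wv_eq_zero h1 h2, zero_mul]


open Polynomial

noncomputable def Umat (n n₁ : ℕ) : Matrix (Fin n) (Option (Fin (n / 2 - n₁))) ℝ[X] :=
  Matrix.of fun u o => o.elim 1 fun i => C (wv n n₁ i u)

noncomputable def Vmat (n n₁ : ℕ) : Matrix (Option (Fin (n / 2 - n₁))) (Fin n) ℝ[X] :=
  Matrix.of fun o v => o.elim 1 fun i => -C (wv n n₁ i v)

lemma UV_entry (u v : Fin n) : (Umat n n₁ * Vmat n n₁) u v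
    = 1 - C (∑ i, wv n n₁ i u * wv n n₁ i v) := by
  rw [Matrix.mul_apply, Fintype.sum_option]
  simp only [Umat, Vmat, Matrix.of_apply, Option.elim_none, Option.elim_some, mul_neg,
    one_mul, ← C_mul]
  rw [Finset.sum_neg_distrib, ← map_sum, sub_eq_add_neg]

lemma charmatrix_eq (hn : 4 ≤ n) :
    Matrix.charmatrix (distLapMatrix (gammaGraph n n₁))
      = (X - C (n : ℝ)) • (1 : Matrix (Fin n) (Fin n) ℝ[X]) + Umat n n₁ * Vmat n n₁ := by
  apply Matrix.ext; intro u v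
  rw [Matrix.add_apply, Matrix.smul_apply, Matrix.one_apply, UV_entry, sum_wv_mul]
  by_cases huv : u = v
  · subst huv
    rw [Matrix.charmatrix_apply_eq, if_pos rfl, if_pos rfl]
    have hd : distLapMatrix (gammaGraph n n₁) u u
        = ((n : ℝ) - 1) + (if ∃ j, IsPair n n₁ u j then 1 else 0) := by
      simp only [distLapMatrix, Matrix.of_apply, if_pos rfl]
      exact transmission hn u
    rw [hd, smul_eq_mul]
    by_cases hm : ∃ j, IsPair n n₁ u j
    · rw [if_pos hm, show (n:ℝ) - 1 + 1 = (n:ℝ) from by ring, map_one]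
      ring
    · rw [if_neg hm, add_zero, map_sub, map_one]
      simp only [map_zero]
      ring
  · rw [Matrix.charmatrix_apply_ne _ _ _ huv, if_neg huv, if_neg huv, smul_eq_mul]
    have hA : distLapMatrix (gammaGraph n n₁) u v
        = -(1 + (if IsPair n n₁ u v then (1:ℝ) else 0)) := by
      simp only [distLapMatrix, Matrix.of_apply, if_neg huv]
      rw [dist_cast_eq hn, if_neg (fun h : v = u => huv h.symm)]
    rw [hA]
    by_cases hp : IsPair n n₁ u v
    · simp only [if_pos hp, map_neg, map_add, map_one]
      ring
    · simp only [if_neg hp, add_zero, map_neg, map_one, map_zero]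
      ring

set_option maxHeartbeats 1000000 in
lemma charpoly_eq (hn : 4 ≤ n) (hev : Even n) (h1 : 1 ≤ n₁) (h2 : n₁ ≤ n / 2) :
    (distLapMatrix (gammaGraph n n₁)).charpoly =
      X * (X - C ((n : ℝ) + 2)) ^ (n / 2 - n₁) * (X - C (n : ℝ)) ^ (n / 2 + n₁ - 1) := by
  classical
  obtain ⟨m, hm⟩ := hev
  set r := n / 2 - n₁ with hr
  set s := n / 2 + n₁ - 1 with hs
  have hrs : n = s + 1 + r := by omega
  set K := FractionRing ℝ[X] with hK
  set φ : ℝ[X] →+* K := algebraMap ℝ[X] K with hφ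
  have hinj : Function.Injective φ := IsFractionRing.injective ℝ[X] K
  apply hinj
  set t : K := φ (X - C (n:ℝ)) with htdef
  have ht : t ≠ 0 := by
    intro h0
    exact Polynomial.X_sub_C_ne_zero (n:ℝ) (hinj (h0.trans (map_zero φ).symm))
  set U' := (Umat n n₁).map φ with hU'
  set V' := (Vmat n n₁).map φ with hV'
  have hmap : (Matrix.charmatrix (distLapMatrix (gammaGraph n n₁))).map φ
      = t • 1 + U' * V' := by
    rw [charmatrix_eq hn, Matrix.map_add _ (fun a b => map_add φ a b), Matrix.map_mul]
    congr 1
    ext u v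
    simp only [Matrix.map_apply, Matrix.smul_apply, Matrix.one_apply, smul_eq_mul,
      apply_ite φ, map_one, map_zero, map_mul]
    rfl
  have hVU : V' * U' = Matrix.diagonal (fun o => Option.elim o ((n:K)) fun _ => -2) := by
    ext o o'
    rw [Matrix.mul_apply]
    rcases o with _ | i <;> rcases o' with _ | j
    · simp only [hV', hU', Matrix.map_apply, Vmat, Umat, Matrix.of_apply, Option.elim_none,
        map_one, one_mul, Matrix.diagonal_apply_eq, Option.elim_none]
      simp [Finset.card_univ]
    · simp only [hV', hU', Matrix.map_apply, Vmat, Umat, Matrix.of_apply, Option.elim_none,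
        Option.elim_some, map_one, one_mul]
      rw [← map_sum, ← map_sum, sum_wv, map_zero, map_zero,
        Matrix.diagonal_apply_ne _ (by simp : (none : Option (Fin r)) ≠ some j)]
    · simp only [hV', hU', Matrix.map_apply, Vmat, Umat, Matrix.of_apply, Option.elim_none,
        Option.elim_some, map_one, mul_one, map_neg]
      rw [Finset.sum_neg_distrib, ← map_sum, ← map_sum, sum_wv, map_zero, map_zero, neg_zero,
        Matrix.diagonal_apply_ne _ (by simp : (some i : Option (Fin r)) ≠ none)]
    · simp only [hV', hU', Matrix.map_apply, Vmat, Umat, Matrix.of_apply,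
        Option.elim_some, map_neg, neg_mul, ← map_mul, ← C_mul]
      have hsum : ∑ x, -φ (C (wv n n₁ i x)) * φ (C (wv n n₁ j x))
          = -φ (C (∑ v, wv n n₁ i v * wv n n₁ j v)) := by
        rw [map_sum, map_sum, ← Finset.sum_neg_distrib]
        refine Finset.sum_congr rfl fun x _ => ?_
        rw [C_mul, map_mul]
        exact neg_mul _ _
      rw [hsum, sum_v_wv_mul]
      by_cases hij : i = j
      · subst hij
        rw [Matrix.diagonal_apply_eq, if_pos rfl, map_ofNat C 2, map_ofNat]
        simp
      · rw [Matrix.diagonal_apply_ne _ (by simpa using hij), if_neg hij]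
        simp
  have hdet : φ ((distLapMatrix (gammaGraph n n₁)).charpoly)
      = t ^ n * ((1 + t⁻¹ * (n:K)) * (1 + t⁻¹ * (-2)) ^ r) := by
    have hcp : (distLapMatrix (gammaGraph n n₁)).charpoly
        = (Matrix.charmatrix (distLapMatrix (gammaGraph n n₁))).det := rfl
    rw [hcp, RingHom.map_det]
    show ((Matrix.charmatrix (distLapMatrix (gammaGraph n n₁))).map ⇑φ).det = _
    rw [hmap]
    have step1 : t • (1 : Matrix (Fin n) (Fin n) K) + U' * V'
        = t • (1 + (t⁻¹ • U') * V') := by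
      rw [smul_add, Matrix.smul_mul, smul_smul, mul_inv_cancel₀ ht, one_smul]
    rw [step1, Matrix.det_smul, Matrix.det_one_add_mul_comm, Matrix.mul_smul, hVU,
      ← Matrix.diagonal_smul, ← Matrix.diagonal_one, Matrix.diagonal_add,
      Matrix.det_diagonal, Fintype.prod_option]
    simp only [Pi.add_apply, Pi.smul_apply, Option.elim_none, Option.elim_some, smul_eq_mul]
    rw [Finset.prod_const, Finset.card_univ, Fintype.card_fin, Fintype.card_fin]
  rw [hdet]
  have hφX : φ (X : ℝ[X]) = t + (n : K) := by
    rw [show (X : ℝ[X]) = (X - C (n:ℝ)) + C (n:ℝ) from by ring, map_add, htdef]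
    congr 1
    rw [show (C ((n:ℕ):ℝ)) = ((n:ℕ) : ℝ[X]) from map_natCast C n, map_natCast]
  have hφA : φ (X - C ((n:ℝ) + 2)) = t - 2 := by
    rw [show (X - C ((n:ℝ)+2) : ℝ[X]) = (X - C (n:ℝ)) - C 2 from by rw [map_add]; ring,
      map_sub, htdef, map_ofNat C 2, map_ofNat]
  rw [map_mul, map_mul, map_pow, map_pow, hφX, hφA, ← htdef]
  have e1 : t * (1 + t⁻¹ * (n:K)) = t + (n:K) := by
    rw [mul_add, mul_one, ← mul_assoc, mul_inv_cancel₀ ht, one_mul]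
  have e2 : t * (1 + t⁻¹ * (-2)) = t - 2 := by
    rw [mul_add, mul_one, ← mul_assoc, mul_inv_cancel₀ ht, one_mul]
    ring
  have hpow : t ^ n = t ^ s * t * t ^ r := by
    rw [hrs, pow_add, pow_add, pow_one]
  rw [hpow, show t ^ s * t * t ^ r * ((1 + t⁻¹ * (n:K)) * (1 + t⁻¹ * (-2)) ^ r)
      = (t * (1 + t⁻¹ * (n:K))) * ((t * (1 + t⁻¹ * (-2))) ^ r * t ^ s) from by
        rw [mul_pow]; ring,
    e1, e2]
  ring

end GammaAux

open Polynomial in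
/-- The characteristic polynomial of the distance Laplacian matrix of `Γ_{n,n₁}` is
`x (x - (n+2))^{n/2 - n₁} (x - n)^{(n/2 + n₁) - 1}`; equivalently, its eigenvalue
multiset is `0` with multiplicity `1`, `n + 2` with multiplicity `n/2 - n₁`, and `n`
with multiplicity `(n/2 + n₁) - 1`. -/
theorem charpoly_distLapMatrix_gammaGraph (n n₁ : ℕ) (hn : 4 ≤ n) (hev : Even n)
    (h1 : 1 ≤ n₁) (h2 : n₁ ≤ n / 2) :
    (distLapMatrix (gammaGraph n n₁)).charpoly =
      X * (X - C ((n : ℝ) + 2)) ^ (n / 2 - n₁) * (X - C (n : ℝ)) ^ (n / 2 + n₁ - 1) ∧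
    (distLapMatrix (gammaGraph n n₁)).charpoly.roots =
      Multiset.replicate 1 (0 : ℝ) + Multiset.replicate (n / 2 - n₁) ((n : ℝ) + 2) +
        Multiset.replicate (n / 2 + n₁ - 1) (n : ℝ) := by
  have hcp := GammaAux.charpoly_eq hn hev h1 h2
  refine ⟨hcp, ?_⟩
  rw [hcp]
  have hX : (X : ℝ[X]) ≠ 0 := Polynomial.X_ne_zero
  have hA : (X - C ((n:ℝ) + 2)) ≠ 0 := Polynomial.X_sub_C_ne_zero _
  have hB : (X - C ((n:ℝ))) ≠ 0 := Polynomial.X_sub_C_ne_zero _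
  rw [Polynomial.roots_mul (mul_ne_zero (mul_ne_zero hX (pow_ne_zero _ hA)) (pow_ne_zero _ hB)),
    Polynomial.roots_mul (mul_ne_zero hX (pow_ne_zero _ hA)),
    Polynomial.roots_pow, Polynomial.roots_pow, Polynomial.roots_X,
    Polynomial.roots_X_sub_C, Polynomial.roots_X_sub_C,
    Multiset.nsmul_singleton, Multiset.nsmul_singleton]
  rfl
end

section
/- Let n ≥ 3 and n₁ be integers with 1 ≤ n₁ ≤ n − (n₁ + 1), and let Θ_{n,n₁} be the graph consisting of two cliques, one on n₁ + 1 vertices and one on n − n₁ vertices, sharing exactly one common (cut) vertex v. Then the characteristic polynomial of the Laplacian matrix L(Θ_{n,n₁}) equals x · (x − 1) · (x − n) · (x − (n₁ + 1))^{n₁ − 1} · (x − (n − n₁))^{n − (n₁ + 2)}. -/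
/-- The graph `Θ_{n,n₁}` on `Fin n`: two cliques, one on the vertices `{0, …, n₁}` and
one on the vertices `{n₁, …, n-1}`, overlapping exactly in the cut vertex `n₁`. -/
def thetaGraph (n n₁ : ℕ) : SimpleGraph (Fin n) where
  Adj i j := i ≠ j ∧ (((i : ℕ) ≤ n₁ ∧ (j : ℕ) ≤ n₁) ∨ (n₁ ≤ (i : ℕ) ∧ n₁ ≤ (j : ℕ)))
  symm := ⟨fun _ _ ⟨h1, h2⟩ => ⟨h1.symm, h2.imp And.symm And.symm⟩⟩
  loopless := ⟨fun _ h => h.1 rfl⟩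

noncomputable instance (n n₁ : ℕ) : DecidableRel (thetaGraph n n₁).Adj :=
  fun _ _ => Classical.dec _

open Finset Polynomial Matrix

set_option linter.unusedSectionVars false

namespace ThetaAux

noncomputable def pc (n p j i : ℕ) : ℝ :=
  if j = 0 then 1
  else if j < p then (if i < j then 1 else if i = j then -(j:ℝ) else 0)
  else if j = p then (if i < p then (n:ℝ) - p - 1 else if i = p then 0 else -(p:ℝ))
  else if j = n - 1 then (if i = p then 1 - (n:ℝ) else 1)
  else (if i ≤ p then 0 else if i ≤ j then 1 else if i = j + 1 then (p:ℝ) - j else 0)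

noncomputable def dv (n p j : ℕ) : ℝ :=
  if j = 0 then 0 else if j < p then (p:ℝ) + 1 else if j = p then 1
  else if j = n - 1 then (n:ℝ) else (n:ℝ) - p

noncomputable def cv (n p j : ℕ) : ℝ :=
  if j = 0 then n else if j < p then (j:ℝ)*((j:ℝ)+1)
  else if j = p then (p:ℝ)*((n:ℝ)-(p:ℝ)-1)*((n:ℝ)-1)
  else if j = n - 1 then (n:ℝ)*((n:ℝ)-1) else ((j:ℝ)-(p:ℝ))*((j:ℝ)-(p:ℝ)+1)

/-- 3-piece shape sum. -/
lemma sum_shape3 (m a : ℕ) (ha : a < m) (x y v : ℝ) :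
    (∑ i ∈ range m, (if i < a then x else if i = a then y else v))
      = a * x + y + ((m - (a+1) : ℕ)) * v := by
  rw [← Finset.sum_range_add_sum_Ico _ (show a + 1 ≤ m by omega),
      Finset.sum_range_succ]
  have e1 : ∑ i ∈ range a, (if i < a then x else if i = a then y else v) = a * x := by
    rw [Finset.sum_congr rfl (fun i hi => by
      rw [if_pos (Finset.mem_range.1 hi)]), Finset.sum_const, Finset.card_range,
      nsmul_eq_mul]
  have e2 : (if a < a then x else if a = a then y else v) = y := by simp
  have e3 : ∑ i ∈ Ico (a+1) m, (if i < a then x else if i = a then y else v)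
      = ((m - (a+1) : ℕ)) * v := by
    rw [Finset.sum_congr rfl (fun i hi => by
      rw [if_neg, if_neg] <;> [skip; skip] <;>
        · have := Finset.mem_Ico.1 hi; omega), Finset.sum_const, Nat.card_Ico,
      nsmul_eq_mul]
  rw [e1, e2, e3]

/-- 3-piece shape sum over Ico. -/
lemma sum_shape3_Ico (l m a : ℕ) (hl : l ≤ a) (ha : a < m) (x y v : ℝ) :
    (∑ i ∈ Ico l m, (if i < a then x else if i = a then y else v))
      = ((a - l : ℕ)) * x + y + ((m - (a+1) : ℕ)) * v := by
  rw [← Finset.sum_Ico_consecutive _ (show l ≤ a+1 by omega) (show a+1 ≤ m by omega),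
      ← Finset.sum_Ico_consecutive _ (show l ≤ a by omega) (show a ≤ a+1 by omega),
      Nat.Ico_succ_singleton, Finset.sum_singleton]
  have e1 : ∑ i ∈ Ico l a, (if i < a then x else if i = a then y else v)
      = ((a - l : ℕ)) * x := by
    rw [Finset.sum_congr rfl (fun i hi => by
      rw [if_pos (Finset.mem_Ico.1 hi).2]), Finset.sum_const, Nat.card_Ico, nsmul_eq_mul]
  have e2 : (if a < a then x else if a = a then y else v) = y := by simp
  have e3 : ∑ i ∈ Ico (a+1) m, (if i < a then x else if i = a then y else v)
      = ((m - (a+1) : ℕ)) * v := by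
    rw [Finset.sum_congr rfl (fun i hi => by
      rw [if_neg, if_neg] <;>
        · have := Finset.mem_Ico.1 hi; omega), Finset.sum_const, Nat.card_Ico, nsmul_eq_mul]
  rw [e1, e2, e3]

/-- 5-piece shape sum. -/
lemma sum_shape5 (n a b : ℕ) (hab : a ≤ b) (hb : b + 1 < n) (x y z w v : ℝ) :
    (∑ i ∈ range n,
      (if i < a then x else if i = a then y else if i ≤ b then z
        else if i = b + 1 then w else v))
    = a * x + y + ((b - a : ℕ)) * z + w + ((n - (b + 2) : ℕ)) * v := by
  rw [← Finset.sum_range_add_sum_Ico _ (show b + 2 ≤ n by omega),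
      ← Finset.sum_range_add_sum_Ico _ (show a + 1 ≤ b + 2 by omega),
      Finset.sum_range_succ,
      ← Finset.sum_Ico_consecutive _ (show a+1 ≤ b+1 by omega) (show b+1 ≤ b+2 by omega),
      Nat.Ico_succ_singleton, Finset.sum_singleton]
  have e1 : ∑ i ∈ range a, (if i < a then x else if i = a then y else if i ≤ b then z
        else if i = b + 1 then w else v) = a * x := by
    rw [Finset.sum_congr rfl (fun i hi => by
      rw [if_pos (Finset.mem_range.1 hi)]), Finset.sum_const, Finset.card_range, nsmul_eq_mul]
  have e2 : (if a < a then x else if a = a then y else if a ≤ b then z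
        else if a = b + 1 then w else v) = y := by simp
  have e3 : ∑ i ∈ Ico (a+1) (b+1), (if i < a then x else if i = a then y else if i ≤ b then z
        else if i = b + 1 then w else v) = ((b - a : ℕ)) * z := by
    rw [Finset.sum_congr rfl (fun i hi => by
      have := Finset.mem_Ico.1 hi
      rw [if_neg (by omega), if_neg (by omega), if_pos (by omega)]),
      Finset.sum_const, Nat.card_Ico, nsmul_eq_mul]
    congr 2
    omega
  have e4 : (if b+1 < a then x else if b+1 = a then y else if b+1 ≤ b then z
        else if b+1 = b + 1 then w else v) = w := by
    rw [if_neg (by omega), if_neg (by omega), if_neg (by omega), if_pos rfl]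
  have e5 : ∑ i ∈ Ico (b+2) n, (if i < a then x else if i = a then y else if i ≤ b then z
        else if i = b + 1 then w else v) = ((n - (b + 2) : ℕ)) * v := by
    rw [Finset.sum_congr rfl (fun i hi => by
      have := Finset.mem_Ico.1 hi
      rw [if_neg (by omega), if_neg (by omega), if_neg (by omega), if_neg (by omega)]),
      Finset.sum_const, Nat.card_Ico, nsmul_eq_mul]
  rw [e1, e2, e3, e4, e5]; ring

section
variable {n p : ℕ} (hp : 1 ≤ p) (hpn : 2*p+1 ≤ n)
include hp hpn

/-- category H1 rewrite -/
lemma pc_H1 {j : ℕ} (h0 : j ≠ 0) (hjp : j < p) (i : ℕ) :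
    pc n p j i = if i < j then 1 else if i = j then -(j:ℝ) else 0 := by
  unfold pc; rw [if_neg h0, if_pos hjp]

lemma pc_u (i : ℕ) :
    pc n p p i = if i < p then (n:ℝ) - p - 1 else if i = p then 0 else -(p:ℝ) := by
  unfold pc; rw [if_neg (by omega), if_neg (by omega), if_pos rfl]

lemma pc_w (i : ℕ) :
    pc n p (n-1) i = if i < p then (1:ℝ) else if i = p then 1 - (n:ℝ) else 1 := by
  unfold pc
  rw [if_neg (by omega), if_neg (by omega), if_neg (by omega), if_pos rfl]
  split_ifs <;> first | rfl | (exfalso; omega)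

lemma pc_H2 {j : ℕ} (hjp : p < j) (hjn : j < n - 1) (i : ℕ) :
    pc n p j i = if i < p then 0 else if i = p then 0 else if i ≤ j then 1
      else if i = j + 1 then (p:ℝ) - j else 0 := by
  unfold pc
  rw [if_neg (by omega), if_neg (by omega), if_neg (by omega), if_neg (by omega)]
  split_ifs <;> first | rfl | omega

lemma sum_col0_full : ∑ i ∈ range n, pc n p 0 i = n := by
  simp [pc]

lemma sum_col_full {j : ℕ} (hj : j < n) (hj0 : j ≠ 0) :
    ∑ i ∈ range n, pc n p j i = 0 := by
  rcases lt_or_ge j p with hjp | hjp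
  · rw [Finset.sum_congr rfl fun i _ => pc_H1 hp hpn hj0 hjp i,
      sum_shape3 n j (by omega)]
    push_cast; ring
  rcases eq_or_lt_of_le hjp with hjp | hjp
  · subst hjp
    rw [Finset.sum_congr rfl fun i _ => pc_u hp hpn i, sum_shape3 n p (by omega),
      Nat.cast_sub (by omega)]
    push_cast; ring
  rcases eq_or_lt_of_le (show j ≤ n - 1 by omega) with hjn | hjn
  · rw [hjn, Finset.sum_congr rfl fun i _ => pc_w hp hpn i, sum_shape3 n p (by omega),
      Nat.cast_sub (by omega)]
    push_cast; ring
  · rw [Finset.sum_congr rfl fun i _ => pc_H2 hp hpn hjp hjn i,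
      sum_shape5 n p j (by omega) (by omega), Nat.cast_sub (by omega)]
    push_cast; ring

lemma sum_sq_full {j : ℕ} (hj : j < n) :
    ∑ i ∈ range n, (pc n p j i)^2 = cv n p j := by
  rcases eq_or_ne j 0 with rfl | hj0
  · simp [pc, cv]
  unfold cv
  rw [if_neg hj0]
  rcases lt_or_ge j p with hjp | hjp
  · have hpt : ∀ i, (pc n p j i)^2
        = if i < j then (1:ℝ) else if i = j then (j:ℝ)*(j:ℝ) else 0 := by
      intro i; rw [pc_H1 hp hpn hj0 hjp i]; split_ifs <;> ring
    rw [if_pos hjp, Finset.sum_congr rfl fun i _ => hpt i, sum_shape3 n j (by omega)]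
    push_cast; ring
  rw [if_neg (by omega)]
  rcases eq_or_lt_of_le hjp with hjp | hjp
  · subst hjp
    have hpt : ∀ i, (pc n p p i)^2
        = if i < p then ((n:ℝ)-p-1)*((n:ℝ)-p-1) else if i = p then 0 else (p:ℝ)*(p:ℝ) := by
      intro i; rw [pc_u hp hpn i]; split_ifs <;> ring
    rw [if_pos rfl, Finset.sum_congr rfl fun i _ => hpt i, sum_shape3 n p (by omega),
      Nat.cast_sub (by omega)]
    push_cast; ring
  rw [if_neg (by omega)]
  rcases eq_or_lt_of_le (show j ≤ n - 1 by omega) with hjn | hjn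
  · subst hjn
    have hpt : ∀ i, (pc n p (n-1) i)^2
        = if i < p then (1:ℝ) else if i = p then ((n:ℝ)-1)*((n:ℝ)-1) else 1 := by
      intro i; rw [pc_w hp hpn i]; split_ifs <;> ring
    rw [if_pos rfl, Finset.sum_congr rfl fun i _ => hpt i, sum_shape3 n p (by omega),
      Nat.cast_sub (by omega)]
    push_cast; ring
  · have hpt : ∀ i, (pc n p j i)^2
        = if i < p then (0:ℝ) else if i = p then 0 else if i ≤ j then 1
            else if i = j + 1 then ((j:ℝ)-(p:ℝ))*((j:ℝ)-(p:ℝ)) else 0 := by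
      intro i; rw [pc_H2 hp hpn hjp hjn i]; split_ifs <;> ring
    rw [if_neg (by omega), Finset.sum_congr rfl fun i _ => hpt i,
      sum_shape5 n p j (by omega) (by omega), Nat.cast_sub (by omega)]
    push_cast; ring

/-- Head sum over `range (p+1)`. -/
lemma sum_col_head {j : ℕ} (hj : j < n) :
    ∑ i ∈ range (p+1), pc n p j i
      = if j = 0 then (p:ℝ)+1 else if j < p then 0 else if j = p then (p:ℝ)*((n:ℝ)-p-1)
          else if j = n-1 then (p:ℝ)+1-n else 0 := by
  have ecast : ((n - (p+1) : ℕ):ℝ) = (n:ℝ)-p-1 := by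
    rw [Nat.cast_sub (by omega)]; push_cast; ring
  rcases eq_or_ne j 0 with rfl | hj0
  · simp [pc]
  rw [if_neg hj0]
  rcases lt_or_ge j p with hjp | hjp
  · rw [if_pos hjp, Finset.sum_congr rfl fun i _ => pc_H1 hp hpn hj0 hjp i,
      sum_shape3 (p+1) j (by omega)]
    push_cast; ring
  rw [if_neg (by omega)]
  rcases eq_or_lt_of_le hjp with hjp | hjp
  · subst hjp
    rw [if_pos rfl, Finset.sum_congr rfl fun i _ => pc_u hp hpn i,
      sum_shape3 (p+1) p (by omega)]
    simp
  rw [if_neg (by omega)]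
  rcases eq_or_lt_of_le (show j ≤ n - 1 by omega) with hjn | hjn
  · subst hjn
    rw [if_pos rfl, Finset.sum_congr rfl fun i _ => pc_w hp hpn i,
      sum_shape3 (p+1) p (by omega)]
    simp; ring
  · rw [if_neg (by omega)]
    have h0 : ∀ i ∈ range (p+1), pc n p j i = 0 := by
      intro i hi
      have hi' := Finset.mem_range.1 hi
      rw [pc_H2 hp hpn hjp hjn i]
      split_ifs <;> first | rfl | omega
    rw [Finset.sum_congr rfl h0, Finset.sum_const, smul_zero]

/-- Tail sum over `Ico p n`. -/
lemma sum_col_tail {j : ℕ} (hj : j < n) :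
    ∑ i ∈ Ico p n, pc n p j i
      = if j = 0 then (n:ℝ)-p else if j < p then 0
          else if j = p then -((p:ℝ)*((n:ℝ)-p-1))
          else if j = n-1 then -(p:ℝ) else 0 := by
  have ecast : ((n - (p+1) : ℕ):ℝ) = (n:ℝ)-p-1 := by
    rw [Nat.cast_sub (by omega)]; push_cast; ring
  rcases eq_or_ne j 0 with rfl | hj0
  · have h1 : ∀ i ∈ Ico p n, pc n p 0 i = 1 := by
      intro i _; unfold pc; rw [if_pos rfl]
    rw [Finset.sum_congr rfl h1, Finset.sum_const, Nat.card_Ico, nsmul_eq_mul,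
      Nat.cast_sub (by omega)]
    simp
  rw [if_neg hj0]
  rcases lt_or_ge j p with hjp | hjp
  · have h0 : ∀ i ∈ Ico p n, pc n p j i = 0 := by
      intro i hi
      have hi' := (Finset.mem_Ico.1 hi).1
      rw [pc_H1 hp hpn hj0 hjp i, if_neg (by omega), if_neg (by omega)]
    rw [if_pos hjp, Finset.sum_congr rfl h0, Finset.sum_const, smul_zero]
  rw [if_neg (by omega)]
  rcases eq_or_lt_of_le hjp with hjp | hjp
  · subst hjp
    rw [if_pos rfl, Finset.sum_congr rfl fun i _ => pc_u hp hpn i,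
      sum_shape3_Ico p n p le_rfl (by omega), ecast]
    simp only [Nat.sub_self, Nat.cast_zero]
    ring
  rw [if_neg (by omega)]
  rcases eq_or_lt_of_le (show j ≤ n - 1 by omega) with hjn | hjn
  · subst hjn
    rw [if_pos rfl, Finset.sum_congr rfl fun i _ => pc_w hp hpn i,
      sum_shape3_Ico p n p le_rfl (by omega), ecast]
    simp only [Nat.sub_self, Nat.cast_zero]
    ring
  · rw [if_neg (by omega)]
    have hsplit := Finset.sum_range_add_sum_Ico (fun i => pc n p j i) (show p ≤ n by omega)
    have hhead : ∑ i ∈ range p, pc n p j i = 0 := by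
      have h0 : ∀ i ∈ range p, pc n p j i = 0 := by
        intro i hi
        rw [pc_H2 hp hpn hjp hjn i, if_pos (Finset.mem_range.1 hi)]
      rw [Finset.sum_congr rfl h0, Finset.sum_const, smul_zero]
    have hfull := sum_col_full hp hpn hj hj0
    rw [← hsplit, hhead, zero_add] at hfull
    exact hfull

lemma sum_col_full' {j : ℕ} (hj : j < n) :
    ∑ i ∈ range n, pc n p j i = if j = 0 then (n:ℝ) else 0 := by
  rcases eq_or_ne j 0 with rfl | hj0
  · rw [if_pos rfl]; exact sum_col0_full hp hpn
  · rw [if_neg hj0]; exact sum_col_full hp hpn hj hj0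

lemma claimA_lt {i j : ℕ} (hi : i < p) (hj : j < n) :
    (p:ℝ) * pc n p j i - ((∑ k ∈ range (p+1), pc n p j k) - pc n p j i)
      = pc n p j i * dv n p j := by
  rw [sum_col_head hp hpn hj]
  unfold pc dv
  split_ifs <;> first | ring1 | (exfalso; omega)

lemma claimA_cut {j : ℕ} (hj : j < n) :
    ((n:ℝ)-1) * pc n p j p - ((∑ k ∈ range n, pc n p j k) - pc n p j p)
      = pc n p j p * dv n p j := by
  rw [sum_col_full' hp hpn hj]
  unfold pc dv
  split_ifs <;> first | ring1 | (exfalso; omega)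

lemma claimA_gt {i j : ℕ} (hi : p < i) (hi' : i < n) (hj : j < n) :
    ((n:ℝ)-1-p) * pc n p j i - ((∑ k ∈ Ico p n, pc n p j k) - pc n p j i)
      = pc n p j i * dv n p j := by
  rw [sum_col_tail hp hpn hj]
  unfold pc dv
  split_ifs <;> first | ring1 | (exfalso; omega)

lemma claimB_offdiag {j j' : ℕ} (hjj : j < j') (hj' : j' < n) :
    ∑ i ∈ range n, pc n p j i * pc n p j' i = 0 := by
  have hj : j < n := by omega
  have hj'0 : j' ≠ 0 := by omega
  rcases eq_or_ne j 0 with rfl | hj0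
  · have hpt : ∀ i, pc n p 0 i * pc n p j' i = pc n p j' i := by
      intro i; rw [show pc n p 0 i = 1 from by unfold pc; rw [if_pos rfl], one_mul]
    rw [Finset.sum_congr rfl fun i _ => hpt i]
    exact sum_col_full hp hpn hj' hj'0
  -- j ≠ 0 from here; find constant c and column jX with product = c * pc jX
  rcases lt_or_ge j p with hjp | hjp
  · -- j is H1
    rcases lt_or_ge j' p with hj'p | hj'p
    · have hpt : ∀ i, pc n p j i * pc n p j' i = pc n p j i := by
        intro i
        rw [pc_H1 hp hpn hj0 hjp i, pc_H1 hp hpn hj'0 hj'p i]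
        split_ifs <;> first | ring1 | (exfalso; omega)
      rw [Finset.sum_congr rfl fun i _ => hpt i]
      exact sum_col_full hp hpn hj hj0
    rcases eq_or_lt_of_le hj'p with hj'p | hj'p
    · subst hj'p
      have hpt : ∀ i, pc n p j i * pc n p p i = ((n:ℝ)-p-1) * pc n p j i := by
        intro i
        rw [pc_H1 hp hpn hj0 hjp i, pc_u hp hpn i]
        split_ifs <;> first | ring1 | (exfalso; omega)
      rw [Finset.sum_congr rfl fun i _ => hpt i, ← Finset.mul_sum,
        sum_col_full hp hpn hj hj0, mul_zero]
    rcases eq_or_lt_of_le (show j' ≤ n - 1 by omega) with hj'n | hj'n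
    · subst hj'n
      have hpt : ∀ i, pc n p j i * pc n p (n-1) i = pc n p j i := by
        intro i
        rw [pc_H1 hp hpn hj0 hjp i, pc_w hp hpn i]
        split_ifs <;> first | ring1 | (exfalso; omega)
      rw [Finset.sum_congr rfl fun i _ => hpt i]
      exact sum_col_full hp hpn hj hj0
    · have hpt : ∀ i, pc n p j i * pc n p j' i = 0 := by
        intro i
        rw [pc_H1 hp hpn hj0 hjp i, pc_H2 hp hpn hj'p hj'n i]
        split_ifs <;> first | ring1 | (exfalso; omega)
      rw [Finset.sum_congr rfl fun i _ => hpt i, Finset.sum_const, smul_zero]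
  rcases eq_or_lt_of_le hjp with hjp | hjp
  · -- j = p (u column)
    subst hjp
    rcases eq_or_lt_of_le (show j' ≤ n - 1 by omega) with hj'n | hj'n
    · subst hj'n
      have hpt : ∀ i, pc n p p i * pc n p (n-1) i = pc n p p i := by
        intro i
        rw [pc_u hp hpn i, pc_w hp hpn i]
        split_ifs <;> first | ring1 | (exfalso; omega)
      rw [Finset.sum_congr rfl fun i _ => hpt i]
      exact sum_col_full hp hpn hj hj0
    · have hpt : ∀ i, pc n p p i * pc n p j' i = -(p:ℝ) * pc n p j' i := by
        intro i
        rw [pc_u hp hpn i, pc_H2 hp hpn (by omega) hj'n i]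
        split_ifs <;> first | ring1 | (exfalso; omega)
      rw [Finset.sum_congr rfl fun i _ => hpt i, ← Finset.mul_sum,
        sum_col_full hp hpn hj' hj'0, mul_zero]
  · -- j is H2 (note j < j' ≤ n-1 forces j < n-1)
    have hjn : j < n - 1 := by omega
    rcases eq_or_lt_of_le (show j' ≤ n - 1 by omega) with hj'n | hj'n
    · subst hj'n
      have hpt : ∀ i, pc n p j i * pc n p (n-1) i = pc n p j i := by
        intro i
        rw [pc_H2 hp hpn hjp hjn i, pc_w hp hpn i]
        split_ifs <;> first | ring1 | (exfalso; omega)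
      rw [Finset.sum_congr rfl fun i _ => hpt i]
      exact sum_col_full hp hpn hj hj0
    · have hpt : ∀ i, pc n p j i * pc n p j' i = pc n p j i := by
        intro i
        rw [pc_H2 hp hpn hjp hjn i, pc_H2 hp hpn (by omega) hj'n i]
        split_ifs <;> first | ring1 | (exfalso; omega)
      rw [Finset.sum_congr rfl fun i _ => hpt i]
      exact sum_col_full hp hpn hj hj0

lemma cv_pos {j : ℕ} (hj : j < n) : 0 < cv n p j := by
  have h1 : (1:ℝ) ≤ (p:ℝ) := by exact_mod_cast hp
  have h2 : 2*(p:ℝ)+1 ≤ (n:ℝ) := by exact_mod_cast hpn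
  unfold cv
  split_ifs with a1 a2 a3 a4
  · linarith
  · have hjr : (1:ℝ) ≤ (j:ℝ) := by
      have : 1 ≤ j := by omega
      exact_mod_cast this
    nlinarith
  · have e1 : (0:ℝ) < (n:ℝ)-(p:ℝ)-1 := by linarith
    have e2 : (0:ℝ) < (n:ℝ)-1 := by linarith
    positivity
  · nlinarith
  · have hjr : (p:ℝ)+1 ≤ (j:ℝ) := by
      have : p+1 ≤ j := by omega
      exact_mod_cast this
    nlinarith
end

/-- Sum over an initial-segment indicator. -/
lemma sum_range_if_lt {m n : ℕ} (h : m ≤ n) (g : ℕ → ℝ) :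
    ∑ k ∈ range n, (if k < m then g k else 0) = ∑ k ∈ range m, g k := by
  rw [← Finset.sum_range_add_sum_Ico _ h,
    Finset.sum_congr rfl (fun k hk => if_pos (Finset.mem_range.1 hk)),
    Finset.sum_congr rfl (fun k (hk : k ∈ Ico m n) =>
      if_neg (by have := (Finset.mem_Ico.1 hk).1; omega)),
    Finset.sum_const, smul_zero, add_zero]

lemma sum_range_if_ge {m n : ℕ} (h : m ≤ n) (g : ℕ → ℝ) :
    ∑ k ∈ range n, (if m ≤ k then g k else 0) = ∑ k ∈ Ico m n, g k := by
  rw [← Finset.sum_range_add_sum_Ico _ h,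
    Finset.sum_congr rfl (fun k (hk : k ∈ range m) =>
      if_neg (by have := Finset.mem_range.1 hk; omega)),
    Finset.sum_congr rfl (fun k (hk : k ∈ Ico m n) => if_pos (Finset.mem_Ico.1 hk).1),
    Finset.sum_const, smul_zero, zero_add]

lemma sum_if_ne (s : Finset ℕ) (i : ℕ) (hi : i ∈ s) (g : ℕ → ℝ) :
    ∑ k ∈ s, (if k = i then 0 else g k) = (∑ k ∈ s, g k) - g i := by
  have h1 : ∀ k ∈ s, (if k = i then 0 else g k) = g k - (if k = i then g k else 0) := by
    intro k _
    split_ifs with h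
    · subst h; ring
    · ring
  rw [Finset.sum_congr rfl h1, Finset.sum_sub_distrib, Finset.sum_ite_eq' s i g, if_pos hi]

end ThetaAux

open ThetaAux

private lemma theta_nbr_sum {n p : ℕ} (hp : 1 ≤ p) (hpn : 2*p+1 ≤ n) (i : Fin n)
    (F : ℕ → ℝ) :
    ∑ u ∈ (thetaGraph n p).neighborFinset i, F (u:ℕ)
      = (if (i:ℕ) < p then ∑ k ∈ range (p+1), F k
         else if (i:ℕ) = p then ∑ k ∈ range n, F k
         else ∑ k ∈ Ico p n, F k) - F (i:ℕ) := by
  classical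
  rw [SimpleGraph.neighborFinset_eq_filter, Finset.sum_filter]
  have hcond : ∀ u : Fin n, (thetaGraph n p).Adj i u
      = ((i:ℕ) ≠ (u:ℕ) ∧ (((i:ℕ) ≤ p ∧ (u:ℕ) ≤ p) ∨ (p ≤ (i:ℕ) ∧ p ≤ (u:ℕ)))) := by
    intro u
    show (i ≠ u ∧ _) = _
    exact propext (and_congr (not_congr Fin.ext_iff) Iff.rfl)
  simp only [hcond]
  rw [Fin.sum_univ_eq_sum_range
    (fun k => if ((i:ℕ) ≠ k ∧ (((i:ℕ) ≤ p ∧ k ≤ p) ∨ (p ≤ (i:ℕ) ∧ p ≤ k))) then F k else 0) n]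
  by_cases hi : (i:ℕ) < p
  · rw [if_pos hi,
      Finset.sum_congr rfl (fun k (hk : k ∈ range n) =>
        (by split_ifs <;> first | rfl | (exfalso; omega) :
          (if ((i:ℕ) ≠ k ∧ (((i:ℕ) ≤ p ∧ k ≤ p) ∨ (p ≤ (i:ℕ) ∧ p ≤ k))) then F k else 0)
            = if k < p + 1 then (if k = (i:ℕ) then 0 else F k) else 0)),
      sum_range_if_lt (by omega), sum_if_ne _ _ (Finset.mem_range.2 (by omega))]
  by_cases hi2 : (i:ℕ) = p
  · rw [if_neg hi, if_pos hi2,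
      Finset.sum_congr rfl (fun k (hk : k ∈ range n) =>
        (by split_ifs <;> first | rfl | (exfalso; omega) :
          (if ((i:ℕ) ≠ k ∧ (((i:ℕ) ≤ p ∧ k ≤ p) ∨ (p ≤ (i:ℕ) ∧ p ≤ k))) then F k else 0)
            = if k = (i:ℕ) then 0 else F k)),
      sum_if_ne _ _ (Finset.mem_range.2 i.isLt)]
  · rw [if_neg hi, if_neg hi2,
      Finset.sum_congr rfl (fun k (hk : k ∈ range n) =>
        (by split_ifs <;> first | rfl | (exfalso; omega) :
          (if ((i:ℕ) ≠ k ∧ (((i:ℕ) ≤ p ∧ k ≤ p) ∨ (p ≤ (i:ℕ) ∧ p ≤ k))) then F k else 0)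
            = if p ≤ k then (if k = (i:ℕ) then 0 else F k) else 0)),
      sum_range_if_ge (by omega), sum_if_ne _ _ (Finset.mem_Ico.2 ⟨by omega, i.isLt⟩)]

private lemma theta_deg {n p : ℕ} (hp : 1 ≤ p) (hpn : 2*p+1 ≤ n) (i : Fin n) :
    (((thetaGraph n p).degree i : ℕ) : ℝ)
      = if (i:ℕ) < p then (p:ℝ) else if (i:ℕ) = p then (n:ℝ)-1 else (n:ℝ)-1-p := by
  classical
  have h := theta_nbr_sum hp hpn i (fun _ => (1:ℝ))
  rw [Finset.sum_const, nsmul_eq_mul, mul_one] at h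
  rw [SimpleGraph.degree, h]
  simp only [Finset.sum_const, Finset.card_range, Nat.card_Ico, nsmul_eq_mul, mul_one]
  split_ifs with h1 h2
  · push_cast; ring
  · push_cast; ring
  · rw [Nat.cast_sub (by omega)]; push_cast; ring

private lemma charpoly_conj {m : ℕ} (P M : Matrix (Fin m) (Fin m) ℝ) (h : IsUnit P.det) :
    (P * M * P⁻¹).charpoly = M.charpoly := by
  have h1 : (Polynomial.C.mapMatrix P) * (Polynomial.C.mapMatrix P⁻¹) = 1 := by
    rw [← _root_.map_mul, Matrix.mul_nonsing_inv P h, _root_.map_one]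
  have key : Matrix.charmatrix (P * M * P⁻¹)
      = (Polynomial.C.mapMatrix P) * Matrix.charmatrix M * (Polynomial.C.mapMatrix P⁻¹) := by
    unfold Matrix.charmatrix
    rw [Matrix.mul_sub, Matrix.sub_mul, _root_.map_mul, _root_.map_mul]
    congr 1
    have hc : (Polynomial.C.mapMatrix P) * Matrix.scalar (Fin m) (X:ℝ[X])
        = Matrix.scalar (Fin m) (X:ℝ[X]) * (Polynomial.C.mapMatrix P) :=
      ((Matrix.scalar_commute (X:ℝ[X]) (fun r => Commute.all _ _) _).eq).symm
    rw [hc, Matrix.mul_assoc, h1, Matrix.mul_one]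
  unfold Matrix.charpoly
  rw [key, Matrix.det_mul, Matrix.det_mul, mul_right_comm, ← Matrix.det_mul, h1,
    Matrix.det_one, one_mul]

private lemma charpoly_diag {m : ℕ} (d : Fin m → ℝ) :
    (Matrix.diagonal d).charpoly = ∏ j : Fin m, (X - C (d j)) := by
  have h : Matrix.charmatrix (Matrix.diagonal d)
      = Matrix.diagonal (fun j => (X:ℝ[X]) - C (d j)) := by
    ext a b
    rcases eq_or_ne a b with rfl | hab
    · rw [Matrix.charmatrix_apply_eq, Matrix.diagonal_apply_eq, Matrix.diagonal_apply_eq]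
    · rw [Matrix.charmatrix_apply_ne _ _ _ hab, Matrix.diagonal_apply_ne _ hab,
        Matrix.diagonal_apply_ne _ hab, map_zero, neg_zero]
  unfold Matrix.charpoly
  rw [h, Matrix.det_diagonal]

open Polynomial in
/-- The characteristic polynomial of the Laplacian matrix of `Θ_{n,n₁}` (a clique on
`n₁ + 1` vertices and a clique on `n - n₁` vertices sharing exactly one cut vertex) is
`x (x - 1) (x - n) (x - (n₁+1))^{n₁ - 1} (x - (n - n₁))^{n - (n₁+2)}`. -/
theorem charpoly_lapMatrix_thetaGraph (n n₁ : ℕ) (hn : 3 ≤ n)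
    (h1 : 1 ≤ n₁) (h2 : n₁ ≤ n - (n₁ + 1)) :
    (SimpleGraph.lapMatrix ℝ (thetaGraph n n₁)).charpoly =
      X * (X - C (1 : ℝ)) * (X - C (n : ℝ)) * (X - C ((n₁ : ℝ) + 1)) ^ (n₁ - 1) *
        (X - C ((n : ℝ) - (n₁ : ℝ))) ^ (n - (n₁ + 2)) := by
  classical
  have hp : 1 ≤ n₁ := h1
  have hpn : 2*n₁+1 ≤ n := by omega
  set P : Matrix (Fin n) (Fin n) ℝ :=
    Matrix.of (fun i j : Fin n => pc n n₁ (j:ℕ) (i:ℕ)) with hPdef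
  set D : Matrix (Fin n) (Fin n) ℝ :=
    Matrix.diagonal (fun j : Fin n => dv n n₁ (j:ℕ)) with hDdef
  have hPapp : ∀ i j : Fin n, P i j = pc n n₁ (j:ℕ) (i:ℕ) := fun i j => rfl
  -- Claim A : L * P = P * D
  have hLP : (thetaGraph n n₁).lapMatrix ℝ * P = P * D := by
    ext i j
    have hrhs : (P * D) i j = pc n n₁ (j:ℕ) (i:ℕ) * dv n n₁ (j:ℕ) := by
      rw [hDdef, Matrix.mul_diagonal, hPapp]
    have hlhs : ((thetaGraph n n₁).lapMatrix ℝ * P) i j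
        = ((thetaGraph n n₁).lapMatrix ℝ *ᵥ (fun k : Fin n => pc n n₁ (j:ℕ) (k:ℕ))) i := by
      rfl
    rw [hlhs, hrhs, SimpleGraph.lapMatrix_mulVec_apply,
      theta_nbr_sum hp hpn i (pc n n₁ (j:ℕ)), theta_deg hp hpn i]
    by_cases hi : (i:ℕ) < n₁
    · rw [if_pos hi, if_pos hi]
      exact claimA_lt hp hpn hi j.isLt
    by_cases hi2 : (i:ℕ) = n₁
    · rw [if_neg hi, if_pos hi2, if_neg hi, if_pos hi2, hi2]
      exact claimA_cut hp hpn j.isLt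
    · rw [if_neg hi, if_neg hi2, if_neg hi, if_neg hi2]
      exact claimA_gt hp hpn (by omega) i.isLt j.isLt
  -- Claim B : P.transpose * P is diagonal with nonzero entries
  have hPtP : P.transpose * P = Matrix.diagonal (fun j : Fin n => cv n n₁ (j:ℕ)) := by
    ext j k
    have h : (P.transpose * P) j k = ∑ i ∈ range n, pc n n₁ (j:ℕ) i * pc n n₁ (k:ℕ) i := by
      rw [Matrix.mul_apply,
        ← Fin.sum_univ_eq_sum_range (fun i => pc n n₁ (j:ℕ) i * pc n n₁ (k:ℕ) i) n]
      rfl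
    rcases eq_or_ne j k with rfl | hjk
    · rw [h, Matrix.diagonal_apply_eq,
        Finset.sum_congr rfl (fun i _ => (pow_two (pc n n₁ (j:ℕ) i)).symm),
        sum_sq_full hp hpn j.isLt]
    · rw [h, Matrix.diagonal_apply_ne _ hjk]
      have hvne : (j:ℕ) ≠ (k:ℕ) := fun hc => hjk (Fin.ext hc)
      rcases lt_or_gt_of_ne hvne with hlt | hgt
      · exact claimB_offdiag hp hpn hlt k.isLt
      · rw [Finset.sum_congr rfl (fun i _ => mul_comm (pc n n₁ (j:ℕ) i) (pc n n₁ (k:ℕ) i))]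
        exact claimB_offdiag hp hpn hgt j.isLt
  -- P is invertible
  have hdet2 : P.det * P.det = ∏ j : Fin n, cv n n₁ (j:ℕ) := by
    have h := congrArg Matrix.det hPtP
    rwa [Matrix.det_mul, Matrix.det_transpose, Matrix.det_diagonal] at h
  have hprod : (∏ j : Fin n, cv n n₁ (j:ℕ)) ≠ 0 :=
    Finset.prod_ne_zero_iff.2 fun j _ => ne_of_gt (cv_pos hp hpn j.isLt)
  have hdet : IsUnit P.det := by
    rw [isUnit_iff_ne_zero]
    intro h0
    apply hprod
    rw [← hdet2, h0, mul_zero]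
  -- conjugation
  have hL : (thetaGraph n n₁).lapMatrix ℝ = P * D * P⁻¹ := by
    rw [← hLP, Matrix.mul_assoc, Matrix.mul_nonsing_inv P hdet, Matrix.mul_one]
  rw [hL, charpoly_conj P D hdet, hDdef, charpoly_diag,
    Fin.prod_univ_eq_prod_range (fun j => X - C (dv n n₁ j)) n]
  -- evaluate the product
  have hIco : Ico (n-1) n = {n-1} := by
    ext x; simp only [Finset.mem_Ico, Finset.mem_singleton]; omega
  rw [← Finset.prod_range_mul_prod_Ico _ (show n₁+1 ≤ n by omega),
    ← Finset.prod_Ico_consecutive _ (show n₁+1 ≤ n-1 by omega) (show n-1 ≤ n by omega),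
    hIco, Finset.prod_singleton, Finset.prod_range_succ,
    ← Finset.prod_range_mul_prod_Ico _ (show 1 ≤ n₁ by omega),
    Finset.prod_range_one]
  have e0 : dv n n₁ 0 = 0 := by unfold dv; rw [if_pos rfl]
  have ep : dv n n₁ n₁ = 1 := by
    unfold dv; rw [if_neg (by omega), if_neg (by omega), if_pos rfl]
  have en : dv n n₁ (n-1) = (n:ℝ) := by
    unfold dv
    rw [if_neg (by omega), if_neg (by omega), if_neg (by omega), if_pos rfl]
  have eH1 : ∏ j ∈ Ico 1 n₁, (X - C (dv n n₁ j)) = (X - C ((n₁:ℝ)+1)) ^ (n₁ - 1) := by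
    rw [Finset.prod_congr rfl (fun j (hj : j ∈ Ico 1 n₁) => by
      have := Finset.mem_Ico.1 hj
      rw [show dv n n₁ j = (n₁:ℝ)+1 from by
        unfold dv; rw [if_neg (by omega), if_pos (by omega)]]),
      Finset.prod_const, Nat.card_Ico]
  have eH2 : ∏ j ∈ Ico (n₁+1) (n-1), (X - C (dv n n₁ j))
      = (X - C ((n:ℝ)-(n₁:ℝ))) ^ (n - (n₁+2)) := by
    rw [Finset.prod_congr rfl (fun j (hj : j ∈ Ico (n₁+1) (n-1)) => by
      have := Finset.mem_Ico.1 hj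
      rw [show dv n n₁ j = (n:ℝ)-(n₁:ℝ) from by
        unfold dv
        rw [if_neg (by omega), if_neg (by omega), if_neg (by omega), if_neg (by omega)]]),
      Finset.prod_const, Nat.card_Ico, show n - 1 - (n₁+1) = n - (n₁+2) by omega]
  rw [e0, ep, en, eH1, eH2, map_zero, sub_zero]
  ring
end
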